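/- arXiv:1005.1369 — 5 statements merged into one kernel-verified Lean document; each statement's English description precedes it below -/
import Mathlib

section
/- Let G_1, …, G_r be confusion graphs on the alphabet Σ_k and let G = ∩_{i=1}^r G_i be the graph on Σ_k in which two letters are adjacent exactly when they are adjacent in G_i for every i. Then every feasible rate vector (R_1, …, R_r) satisfies Σ_{i=1}^{r} R_i ≤ log₂ c(G). -/
/-- Two strings of length `n` over the alphabet are distinguishable for a user with
confusion graph `G` if they differ at some coordinate at two non-adjacent letters. -/
def Distinguishable {V : Type*} (G : SimpleGraph V) {n : ℕ} (x y : Fin n → V) : Prop :=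
  ∃ t : Fin n, x t ≠ y t ∧ ¬ G.Adj (x t) (y t)

/-- `alphaN G n` is the largest size of a family of strings in `V^n` that are pairwise
distinguishable (the independence number of the `n`-fold strong product of `G`). -/
noncomputable def alphaN {V : Type*} [Fintype V] (G : SimpleGraph V) (n : ℕ) : ℕ :=
  sSup {N : ℕ | ∃ S : Finset (Fin n → V), S.card = N ∧
    ∀ x ∈ S, ∀ y ∈ S, x ≠ y → Distinguishable G x y}

/-- The Shannon capacity of a confusion graph: `c(G) = sup_{n ≥ 1} α_n(G)^{1/n}`. -/
noncomputable def shannonCapacity {V : Type*} [Fintype V] (G : SimpleGraph V) : ℝ :=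
  ⨆ n : ℕ, (alphaN G (n + 1) : ℝ) ^ (((n : ℝ) + 1))⁻¹

/-- `(m 1, …, m r)` is feasible at length `n` for the confusion graphs `G i` if there is an
encoding map `E` such that any two message tuples differing in the `i`-th component get codewords
that are distinguishable for user `i` (so user `i` can decode his own message). -/
def FeasibleAtLength {k r : ℕ} (G : Fin r → SimpleGraph (Fin k)) (m : Fin r → ℕ) (n : ℕ) :
    Prop :=
  ∃ E : (∀ i : Fin r, Fin (m i)) → (Fin n → Fin k),
    ∀ i : Fin r, ∀ a b : (∀ i : Fin r, Fin (m i)), a i ≠ b i →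
      ∃ t : Fin n, E a t ≠ E b t ∧ ¬ (G i).Adj (E a t) (E b t)


lemma alphaN_le_pow {k : ℕ} (G : SimpleGraph (Fin k)) (n : ℕ) :
    alphaN G n ≤ k ^ n := by
  unfold alphaN
  refine csSup_le ⟨0, ∅, by simp, by simp⟩ ?_
  rintro N ⟨S, hcard, -⟩
  calc N = S.card := hcard.symm
    _ ≤ Fintype.card (Fin n → Fin k) := S.card_le_univ
    _ = k ^ n := by simp

lemma prod_le_alphaN {k r n : ℕ} {G : Fin r → SimpleGraph (Fin k)} {m : Fin r → ℕ}
    (h : FeasibleAtLength G m n) : ∏ i, m i ≤ alphaN (⨅ i, G i) n := by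
  obtain ⟨E, hE⟩ := h
  have hdist : ∀ a b : (∀ i : Fin r, Fin (m i)), a ≠ b →
      Distinguishable (⨅ i, G i) (E a) (E b) := by
    intro a b hab
    obtain ⟨i, hi⟩ := Function.ne_iff.mp hab
    obtain ⟨t, ht1, ht2⟩ := hE i a b hi
    exact ⟨t, ht1, fun hadj => ht2 ((SimpleGraph.iInf_adj.mp hadj).1 i)⟩
  have hinj : Function.Injective E := by
    intro a b hab
    by_contra hne
    obtain ⟨t, ht1, -⟩ := hdist a b hne
    exact ht1 (by rw [hab])
  apply le_csSup
  · refine ⟨k ^ n, fun N hN => ?_⟩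
    obtain ⟨S, hcard, -⟩ := hN
    calc N = S.card := hcard.symm
      _ ≤ Fintype.card (Fin n → Fin k) := S.card_le_univ
      _ = k ^ n := by simp
  · refine ⟨Finset.univ.image E, ?_, ?_⟩
    · rw [Finset.card_image_of_injective _ hinj, Finset.card_univ]
      simp [Fintype.card_pi]
    · intro x hx y hy hxy
      obtain ⟨a, -, rfl⟩ := Finset.mem_image.mp hx
      obtain ⟨b, -, rfl⟩ := Finset.mem_image.mp hy
      exact hdist a b (fun h => hxy (by rw [h]))

/-- A rate vector `R` of nonnegative reals is feasible if there are positive integers `m n i`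
with `(m n 1, …, m n r)` feasible at length `n` for every `n` and `log₂ (m n i) / n → R i`. -/
def FeasibleRate {k r : ℕ} (G : Fin r → SimpleGraph (Fin k)) (R : Fin r → ℝ) : Prop :=
  (∀ i, 0 ≤ R i) ∧
  ∃ m : ℕ → Fin r → ℕ,
    (∀ n i, 0 < m n i) ∧
    (∀ n : ℕ, FeasibleAtLength G (m n) n) ∧
    ∀ i, Filter.Tendsto (fun n : ℕ => Real.logb 2 (m n i) / n) Filter.atTop (nhds (R i))

/-- Every feasible rate vector satisfies `∑ i, R i ≤ log₂ c(⋂ i, G i)`, where the intersection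
graph joins two letters exactly when they are adjacent in `G i` for every `i`. -/
theorem sum_rate_le_logb_shannonCapacity_iInf {k r : ℕ} (hk : 2 ≤ k)
    (G : Fin r → SimpleGraph (Fin k)) (R : Fin r → ℝ) (hR : FeasibleRate G R) :
    ∑ i : Fin r, R i ≤ Real.logb 2 (shannonCapacity (⨅ i : Fin r, G i)) := by
  obtain ⟨hR0, m, hmpos, hfeas, hlim⟩ := hR
  set Gi := ⨅ i : Fin r, G i with hGi
  set c := shannonCapacity Gi with hc
  have hbdd : BddAbove (Set.range fun n : ℕ => (alphaN Gi (n+1) : ℝ) ^ (((n:ℝ)+1))⁻¹) := by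
    refine ⟨(k : ℝ), ?_⟩
    rintro x ⟨n, rfl⟩
    have h1 : (alphaN Gi (n+1) : ℝ) ≤ (k:ℝ) ^ ((n:ℕ)+1) := by
      exact_mod_cast alphaN_le_pow Gi (n+1)
    have hn1 : ((n:ℝ)+1) ≠ 0 := by positivity
    calc (alphaN Gi (n+1) : ℝ) ^ (((n:ℝ)+1))⁻¹
        ≤ ((k:ℝ) ^ ((n:ℕ)+1)) ^ (((n:ℝ)+1))⁻¹ :=
          Real.rpow_le_rpow (by positivity) h1 (by positivity)
      _ = (k:ℝ) := by
          rw [← Real.rpow_natCast (k:ℝ) (n+1), ← Real.rpow_mul (by positivity)]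
          push_cast
          rw [mul_inv_cancel₀ hn1, Real.rpow_one]
  -- per-n estimate for n ≥ 1
  have key : ∀ N : ℕ, ∑ i, Real.logb 2 (m (N+1) i) / (N+1 : ℕ) ≤ Real.logb 2 c := by
    intro N
    set n := N + 1 with hn
    set P := ∏ i, m n i with hP
    set A := alphaN Gi n with hA
    have hPA : P ≤ A := prod_le_alphaN (hfeas n)
    have hP1 : 1 ≤ P := Finset.one_le_prod' (fun i _ => hmpos n i)
    have hA1 : 1 ≤ A := le_trans hP1 hPA
    have hApos : (0:ℝ) < A := by exact_mod_cast lt_of_lt_of_le one_pos hA1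
    have hnpos : (0:ℝ) < (n:ℝ) := by positivity
    have step1 : ∑ i, Real.logb 2 (m n i) = Real.logb 2 (P : ℝ) := by
      rw [hP]
      push_cast
      rw [Real.logb_prod _ _ (fun i _ => (by exact_mod_cast (hmpos n i).ne' : ((m n i : ℝ)) ≠ 0))]
    have step2 : Real.logb 2 (P : ℝ) ≤ Real.logb 2 (A : ℝ) :=
      Real.logb_le_logb_of_le (by norm_num) (by exact_mod_cast lt_of_lt_of_le one_pos hP1)
        (by exact_mod_cast hPA)
    have step3 : Real.logb 2 (A : ℝ) / n = Real.logb 2 ((A:ℝ) ^ ((n:ℝ))⁻¹) := by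
      rw [Real.logb, Real.logb, Real.log_rpow hApos]
      ring
    have step4 : (A:ℝ) ^ ((n:ℝ))⁻¹ ≤ c := by
      have := le_ciSup hbdd N
      simpa [hc, shannonCapacity, hA, hn] using this
    have step5 : Real.logb 2 ((A:ℝ) ^ ((n:ℝ))⁻¹) ≤ Real.logb 2 c :=
      Real.logb_le_logb_of_le (by norm_num) (by positivity) step4
    calc ∑ i, Real.logb 2 (m n i) / (n:ℕ)
        = (∑ i, Real.logb 2 (m n i)) / (n:ℝ) := by rw [Finset.sum_div]
      _ = Real.logb 2 (P : ℝ) / n := by rw [step1]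
      _ ≤ Real.logb 2 (A : ℝ) / n := by gcongr
      _ = Real.logb 2 ((A:ℝ) ^ ((n:ℝ))⁻¹) := step3
      _ ≤ Real.logb 2 c := step5
  have hsum : Filter.Tendsto (fun n : ℕ => ∑ i, Real.logb 2 (m n i) / n)
      Filter.atTop (nhds (∑ i, R i)) :=
    tendsto_finset_sum _ (fun i _ => hlim i)
  refine le_of_tendsto hsum ?_
  filter_upwards [Filter.eventually_ge_atTop 1] with n hn
  obtain ⟨N, rfl⟩ := Nat.exists_eq_succ_of_ne_zero (by omega : n ≠ 0)
  simpa using key N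
end

section
/- Let 2 ≤ d ≤ k, let G_1 be the complete graph on Σ_k minus a clique on Σ_d, and let G_2 be the empty graph on Σ_k (user 2 distinguishes all letters). Then for every α ∈ [0,1] the rate vector (α·log₂ d, (1−α)·log₂ k) is optimal; in particular it is feasible, and every feasible rate vector (R_1, R_2) with R_1 ≥ α·log₂ d satisfies R_2 ≤ (1−α)·log₂ k. -/
/-- A feasible rate vector for two users is optimal if no user can increase his rate while
the other maintains the same rate. -/
def OptimalRate {k : ℕ} (G : Fin 2 → SimpleGraph (Fin k)) (R : Fin 2 → ℝ) : Prop :=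
  FeasibleRate G R ∧
  (¬ ∃ R1' : ℝ, R 0 < R1' ∧ FeasibleRate G ![R1', R 1]) ∧
  (¬ ∃ R2' : ℝ, R 1 < R2' ∧ FeasibleRate G ![R 0, R2'])

open Real Finset

lemma rpow_diff_mono {c : ℝ} (hc : 1 ≤ c) {a b x : ℝ} (hb : 0 ≤ b) (hba : b ≤ a)
    (hx : 0 ≤ x) : (b + x) ^ c - b ^ c ≤ (a + x) ^ c - a ^ c := by
  have ha : 0 ≤ a := hb.trans hba
  have hf := convexOn_rpow hc
  rw [sub_le_sub_iff]
  rcases eq_or_lt_of_le hba with rfl | hlt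
  · linarith [le_refl ((b+x)^c)]
  rcases eq_or_lt_of_le hx with rfl | hxpos
  · simp only [add_zero]; linarith
  have hvu : 0 < (a + x) - b := by linarith
  set lam := x / ((a + x) - b) with hlam
  have hlam0 : 0 ≤ lam := div_nonneg hx hvu.le
  have hlam1 : lam ≤ 1 := by rw [hlam, div_le_one hvu]; linarith
  have hlamx : lam * ((a + x) - b) = x := div_mul_cancel₀ x (ne_of_gt hvu)
  have hu : b ∈ Set.Ici (0:ℝ) := hb
  have hv : (a + x) ∈ Set.Ici (0:ℝ) := by simp only [Set.mem_Ici]; linarith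
  have e1 : a ^ c ≤ lam * b ^ c + (1 - lam) * (a + x) ^ c := by
    have h := hf.2 hu hv hlam0 (show (0:ℝ) ≤ 1 - lam by linarith)
      (show lam + (1 - lam) = 1 by ring)
    rw [smul_eq_mul, smul_eq_mul, smul_eq_mul, smul_eq_mul] at h
    have harg : lam * b + (1 - lam) * (a + x) = a := by nlinarith [hlamx]
    rw [harg] at h; exact h
  have e2 : (b + x) ^ c ≤ (1 - lam) * b ^ c + lam * (a + x) ^ c := by
    have h := hf.2 hu hv (show (0:ℝ) ≤ 1 - lam by linarith) hlam0
      (show (1 - lam) + lam = 1 by ring)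
    rw [smul_eq_mul, smul_eq_mul, smul_eq_mul, smul_eq_mul] at h
    have harg : (1 - lam) * b + lam * (a + x) = b + x := by nlinarith [hlamx]
    rw [harg] at h; exact h
  linarith

lemma key_sum_ineq {ι : Type*} {c : ℝ} (hc : 1 ≤ c) (s : Finset ι) (v : ι → ℝ) (t : ℝ)
    (ht : 0 ≤ t) (hv : ∀ j ∈ s, t ≤ v j) :
    ∑ j ∈ s, v j ^ c + ((s.card : ℝ) ^ c - s.card) * t ^ c ≤ (∑ j ∈ s, v j) ^ c := by
  classical
  induction s using Finset.induction_on with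
  | empty => simp [Real.zero_rpow (by linarith : c ≠ 0)]
  | @insert a s ha ih =>
    have hv' : ∀ j ∈ s, t ≤ v j := fun j hj => hv j (mem_insert_of_mem hj)
    have hva : t ≤ v a := hv a (mem_insert_self a s)
    have IH := ih hv'
    have hS0 : (0:ℝ) ≤ (s.card : ℝ) := by positivity
    have hAS : (s.card : ℝ) * t ≤ ∑ j ∈ s, v j := by
      calc (s.card : ℝ) * t = ∑ _j ∈ s, t := by rw [Finset.sum_const, nsmul_eq_mul]
        _ ≤ ∑ j ∈ s, v j := Finset.sum_le_sum hv'
    have hA0 : (0:ℝ) ≤ ∑ j ∈ s, v j := le_trans (by positivity) hAS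
    rw [Finset.sum_insert ha, Finset.sum_insert ha, Finset.card_insert_of_notMem ha]
    push_cast
    set A := ∑ j ∈ s, v j
    set S := (s.card : ℝ)
    have d1 : ((S * t) + v a) ^ c - (S * t) ^ c ≤ (A + v a) ^ c - A ^ c :=
      rpow_diff_mono hc (by positivity) hAS (le_trans ht hva)
    have d2 : (t + S * t) ^ c - t ^ c ≤ (v a + S * t) ^ c - (v a) ^ c :=
      rpow_diff_mono hc ht hva (by positivity)
    have e1 : (t + S * t) ^ c = (S + 1) ^ c * t ^ c := by
      rw [show t + S * t = (S + 1) * t by ring, Real.mul_rpow (by positivity) ht]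
    have e2 : (S * t) ^ c = S ^ c * t ^ c := Real.mul_rpow hS0 ht
    rw [show S * t + v a = v a + S * t by ring, e2] at d1
    rw [e1] at d2
    rw [show A + v a = v a + A by ring] at d1
    linarith

open Real Finset

section CubeCount

variable {k d : ℕ}

/-- `z` lies in the `Σ_d`-cube of `x`: wherever `x` has a letter `< d`, `z` agrees with it. -/
def InCube {k d n : ℕ} (x : Fin n → Fin k) (z : Fin n → Fin d) : Prop :=
  ∀ t, (x t : ℕ) < d → (z t : ℕ) = (x t : ℕ)

instance {k d n : ℕ} (x : Fin n → Fin k) (z : Fin n → Fin d) : Decidable (InCube x z) :=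
  inferInstanceAs (Decidable (∀ t, _ → _))

/-- number of `x : Σ_k^n` whose cube is inside `V`. -/
def NV (k d : ℕ) (n : ℕ) (V : Finset (Fin n → Fin d)) : ℕ :=
  (Finset.univ.filter (fun x : Fin n → Fin k => ∀ z, InCube x z → z ∈ V)).card

def Vte {d : ℕ} {n : ℕ} (V : Finset (Fin (n+1) → Fin d)) (j : Fin d) :
    Finset (Fin n → Fin d) :=
  Finset.univ.filter (fun w => Fin.cons j w ∈ V)

def Vcap {d : ℕ} {n : ℕ} (V : Finset (Fin (n+1) → Fin d)) :
    Finset (Fin n → Fin d) :=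
  Finset.univ.filter (fun w => ∀ j, Fin.cons j w ∈ V)

lemma vcap_subset_vte {d n : ℕ} (V : Finset (Fin (n+1) → Fin d)) (j : Fin d) :
    Vcap V ⊆ Vte V j := by
  intro w hw
  simp only [Vcap, Vte, mem_filter, mem_univ, true_and] at hw ⊢
  exact hw j

lemma card_split {d n : ℕ} (V : Finset (Fin (n+1) → Fin d)) :
    V.card = ∑ j : Fin d, (Vte V j).card := by
  classical
  have h := Finset.card_eq_sum_card_fiberwise
    (f := fun z : Fin (n+1) → Fin d => z 0) (s := V) (t := Finset.univ)
    (fun x _ => mem_univ _)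
  rw [h]
  refine Finset.sum_congr rfl (fun j _ => ?_)
  refine Finset.card_bij (fun z _ => Fin.tail z) ?_ ?_ ?_
  · intro z hz
    simp only [mem_filter] at hz
    simp only [Vte, mem_filter, mem_univ, true_and]
    rw [← hz.2, Fin.cons_self_tail]
    exact hz.1
  · intro z hz z' hz' hzz
    simp only [mem_filter] at hz hz'
    have hT : Fin.tail z = Fin.tail z' := hzz
    rw [← Fin.cons_self_tail z, ← Fin.cons_self_tail z', hz.2, hz'.2, hT]
  · intro w hw
    simp only [Vte, mem_filter, mem_univ, true_and] at hw
    exact ⟨Fin.cons j w, by simp [mem_filter, hw], by simp [Fin.tail_cons]⟩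

lemma fiber_card {n : ℕ} (V : Finset (Fin (n+1) → Fin d)) (v : Fin k) :
    (Finset.univ.filter (fun x : Fin (n+1) → Fin k =>
        (∀ z, InCube x z → z ∈ V) ∧ x 0 = v)).card
      = if hv : (v : ℕ) < d then NV k d n (Vte V ⟨v, hv⟩) else NV k d n (Vcap V) := by
  classical
  split_ifs with hv
  · -- low letter
    refine Finset.card_bij (fun x _ => Fin.tail x) ?_ ?_ ?_
    · intro x hx
      simp only [mem_filter, mem_univ, true_and] at hx
      simp only [NV, mem_filter, mem_univ, true_and]
      intro w hw
      simp only [Vte, mem_filter, mem_univ, true_and]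
      refine hx.1 (Fin.cons ⟨v, hv⟩ w) ?_
      intro t
      refine Fin.cases ?_ ?_ t
      · intro _; simp [Fin.cons_zero, hx.2]
      · intro t' ht'
        simp only [Fin.cons_succ]
        exact hw t' ht'
    · intro x hx x' hx' hxx
      simp only [mem_filter, mem_univ, true_and] at hx hx'
      have hT : Fin.tail x = Fin.tail x' := hxx
      rw [← Fin.cons_self_tail x, ← Fin.cons_self_tail x', hx.2, hx'.2, hT]
    · intro y hy
      simp only [NV, mem_filter, mem_univ, true_and] at hy
      refine ⟨Fin.cons v y, ?_, by simp [Fin.tail_cons]⟩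
      simp only [mem_filter, mem_univ, true_and, Fin.cons_zero, and_true]
      intro z hz
      have hz0 : (z 0 : ℕ) = (v : ℕ) := by
        have := hz 0 (by simpa [Fin.cons_zero] using hv)
        simpa [Fin.cons_zero] using this
      have htail : InCube (k := k) (d := d) y (Fin.tail z) := by
        intro t' ht'
        have := hz t'.succ (by simpa [Fin.cons_succ] using ht')
        simpa [Fin.cons_succ, Fin.tail] using this
      have hmem := hy (Fin.tail z) htail
      simp only [Vte, mem_filter, mem_univ, true_and] at hmem
      have hzeq : z = Fin.cons (⟨v, hv⟩ : Fin d) (Fin.tail z) := by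
        funext t
        refine Fin.cases ?_ ?_ t
        · show z 0 = Fin.cons (⟨v, hv⟩ : Fin d) (Fin.tail z) 0
          rw [Fin.cons_zero]
          exact Fin.ext hz0
        · intro t'
          show z t'.succ = Fin.cons (⟨v, hv⟩ : Fin d) (Fin.tail z) t'.succ
          rw [Fin.cons_succ]
          rfl
      rwa [← hzeq] at hmem
  · -- high letter
    refine Finset.card_bij (fun x _ => Fin.tail x) ?_ ?_ ?_
    · intro x hx
      simp only [mem_filter, mem_univ, true_and] at hx
      simp only [NV, mem_filter, mem_univ, true_and]
      intro w hw
      simp only [Vcap, mem_filter, mem_univ, true_and]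
      intro j
      refine hx.1 (Fin.cons j w) ?_
      intro t
      refine Fin.cases ?_ ?_ t
      · intro h0
        exact absurd (by rwa [hx.2] at h0) hv
      · intro t' ht'
        simp only [Fin.cons_succ]
        exact hw t' ht'
    · intro x hx x' hx' hxx
      simp only [mem_filter, mem_univ, true_and] at hx hx'
      have hT : Fin.tail x = Fin.tail x' := hxx
      rw [← Fin.cons_self_tail x, ← Fin.cons_self_tail x', hx.2, hx'.2, hT]
    · intro y hy
      simp only [NV, mem_filter, mem_univ, true_and] at hy
      refine ⟨Fin.cons v y, ?_, by simp [Fin.tail_cons]⟩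
      simp only [mem_filter, mem_univ, true_and, Fin.cons_zero, and_true]
      intro z hz
      have htail : InCube (k := k) (d := d) y (Fin.tail z) := by
        intro t' ht'
        have := hz t'.succ (by simpa [Fin.cons_succ] using ht')
        simpa [Fin.cons_succ, Fin.tail] using this
      have hmem := hy (Fin.tail z) htail
      simp only [Vcap, mem_filter, mem_univ, true_and] at hmem
      have hzeq : z = Fin.cons (z 0) (Fin.tail z) := (Fin.cons_self_tail z).symm
      rw [hzeq]
      exact hmem (z 0)

lemma NV_split {n : ℕ} (hdk : d ≤ k) (V : Finset (Fin (n+1) → Fin d)) :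
    NV k d (n+1) V = ∑ j : Fin d, NV k d n (Vte V j) + (k - d) * NV k d n (Vcap V) := by
  classical
  have h := Finset.card_eq_sum_card_fiberwise
    (f := fun x : Fin (n+1) → Fin k => x 0)
    (s := Finset.univ.filter (fun x : Fin (n+1) → Fin k => ∀ z, InCube x z → z ∈ V))
    (t := Finset.univ) (fun x _ => mem_univ _)
  set g : ℕ → ℕ := fun v => if hv : v < d then NV k d n (Vte V ⟨v, hv⟩)
    else NV k d n (Vcap V) with hg
  have hNV : NV k d (n+1) V = ∑ i ∈ Finset.range k, g i := by
    unfold NV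
    rw [h, ← Fin.sum_univ_eq_sum_range g k]
    refine Finset.sum_congr rfl (fun v _ => ?_)
    have h1 : (Finset.filter (fun x : Fin (n+1) → Fin k => x 0 = v)
        (Finset.univ.filter (fun x => ∀ z, InCube x z → z ∈ V))).card
        = (Finset.univ.filter (fun x : Fin (n+1) → Fin k =>
            (∀ z, InCube x z → z ∈ V) ∧ x 0 = v)).card := by
      congr 1
      rw [Finset.filter_filter]
    rw [h1, fiber_card V v]
  have h2 : ∑ i ∈ Finset.range d, g i = ∑ j : Fin d, NV k d n (Vte V j) := by
    rw [← Fin.sum_univ_eq_sum_range g d]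
    refine Finset.sum_congr rfl (fun j _ => ?_)
    have : g (j : ℕ) = NV k d n (Vte V ⟨(j : ℕ), j.isLt⟩) := by
      simp only [hg]
      exact dif_pos j.isLt
    rw [this, Fin.eta]
  have h3 : ∑ i ∈ Finset.Ico d k, g i = (k - d) * NV k d n (Vcap V) := by
    have hcongr : ∀ i ∈ Finset.Ico d k, g i = NV k d n (Vcap V) := by
      intro i hi
      simp only [hg]
      exact dif_neg (not_lt.2 (Finset.mem_Ico.1 hi).1)
    rw [Finset.sum_congr rfl hcongr, Finset.sum_const, Nat.card_Ico, smul_eq_mul]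
  have h4 : ∑ i ∈ Finset.range k, g i
      = ∑ i ∈ Finset.range d, g i + ∑ i ∈ Finset.Ico d k, g i := by
    rw [Finset.range_eq_Ico, Finset.range_eq_Ico]
    exact (Finset.sum_Ico_consecutive g (Nat.zero_le d) hdk).symm
  rw [hNV, h4, h2, h3]

lemma NV_le (hd : 2 ≤ d) (hdk : d ≤ k) :
    ∀ (n : ℕ) (V : Finset (Fin n → Fin d)),
      (NV k d n V : ℝ) ≤ (V.card : ℝ) ^ (Real.logb d k) := by
  have hd1 : (1:ℝ) < (d:ℝ) := by exact_mod_cast hd.trans_lt' one_lt_two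
  have hk1 : (1:ℝ) < (k:ℝ) := by
    have : 2 ≤ k := hd.trans hdk
    exact_mod_cast this.trans_lt' one_lt_two
  have hc : 1 ≤ Real.logb d k := by
    rw [Real.logb, le_div_iff₀ (Real.log_pos hd1), one_mul]
    exact Real.log_le_log (by linarith) (by exact_mod_cast hdk)
  have hdc : (d:ℝ) ^ (Real.logb d k) = (k:ℝ) :=
    Real.rpow_logb (by linarith) (by linarith) (by linarith)
  intro n
  induction n with
  | zero =>
    intro V
    rcases Finset.eq_empty_or_nonempty V with rfl | hV
    · have hzero : NV k d 0 (∅ : Finset (Fin 0 → Fin d)) = 0 := by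
        unfold NV
        rw [Finset.card_eq_zero, Finset.filter_eq_empty_iff]
        intro x _
        push_neg
        exact ⟨Fin.elim0, fun t => t.elim0, by simp⟩
      rw [hzero]
      simp [Real.zero_rpow (by linarith : Real.logb d k ≠ 0)]
    · have h1 : (1:ℝ) ≤ (V.card : ℝ) := by
        exact_mod_cast Finset.card_pos.2 hV
      have h2 : (NV k d 0 V : ℝ) ≤ 1 := by
        have : NV k d 0 V ≤ 1 := by
          refine le_trans (Finset.card_filter_le _ _) ?_
          simp
        exact_mod_cast this
      calc (NV k d 0 V : ℝ) ≤ 1 := h2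
        _ = (1:ℝ) ^ (Real.logb d k) := (Real.one_rpow _).symm
        _ ≤ (V.card : ℝ) ^ (Real.logb d k) :=
          Real.rpow_le_rpow zero_le_one h1 (by linarith)
  | succ n ih =>
    intro V
    rw [NV_split hdk V]
    push_cast [Nat.cast_sub hdk]
    set c := Real.logb d k with hcdef
    have hkd : (0:ℝ) ≤ (k:ℝ) - d := by
      have : (d:ℝ) ≤ k := by exact_mod_cast hdk
      linarith
    have step1 : (∑ j : Fin d, (NV k d n (Vte V j) : ℝ))
        + ((k:ℝ) - d) * (NV k d n (Vcap V) : ℝ)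
        ≤ (∑ j : Fin d, ((Vte V j).card : ℝ) ^ c)
          + ((k:ℝ) - d) * ((Vcap V).card : ℝ) ^ c := by
      refine add_le_add (Finset.sum_le_sum (fun j _ => ih _)) ?_
      exact mul_le_mul_of_nonneg_left (ih _) hkd
    have step2 : (∑ j : Fin d, ((Vte V j).card : ℝ) ^ c)
        + ((k:ℝ) - d) * ((Vcap V).card : ℝ) ^ c
        ≤ (∑ j : Fin d, ((Vte V j).card : ℝ)) ^ c := by
      have hkey := key_sum_ineq (ι := Fin d) hc Finset.univ
        (fun j => ((Vte V j).card : ℝ)) (((Vcap V).card : ℝ)) (by positivity)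
        (fun j _ => by
          show ((Vcap V).card : ℝ) ≤ ((Vte V j).card : ℝ)
          exact_mod_cast Finset.card_le_card (vcap_subset_vte V j))
      simp only [Finset.card_univ, Fintype.card_fin] at hkey
      have hco : ((d:ℝ) ^ c - d) = (k:ℝ) - d := by rw [hcdef, hdc]
      rw [hco] at hkey
      exact hkey
    have hVcard : (V.card : ℝ) = ∑ j : Fin d, ((Vte V j).card : ℝ) := by
      rw [card_split V]
      push_cast
      rfl
    calc (∑ j : Fin d, (NV k d n (Vte V j) : ℝ))
          + ((k:ℝ) - d) * (NV k d n (Vcap V) : ℝ)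
        ≤ (∑ j : Fin d, ((Vte V j).card : ℝ) ^ c)
          + ((k:ℝ) - d) * ((Vcap V).card : ℝ) ^ c := step1
      _ ≤ (∑ j : Fin d, ((Vte V j).card : ℝ)) ^ c := step2
      _ = (V.card : ℝ) ^ c := by rw [hVcard]

end CubeCount

section Converse

/-- pairing of the two messages into a message tuple -/
def pr {m : Fin 2 → ℕ} (i : Fin (m 0)) (a2 : Fin (m 1)) : ∀ j : Fin 2, Fin (m j) :=
  fun j => match j with
  | ⟨0, _⟩ => i
  | ⟨1, _⟩ => a2

@[simp] lemma pr_zero {m : Fin 2 → ℕ} (i : Fin (m 0)) (a2 : Fin (m 1)) : pr i a2 0 = i := rfl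
@[simp] lemma pr_one {m : Fin 2 → ℕ} (i : Fin (m 0)) (a2 : Fin (m 1)) : pr i a2 1 = a2 := rfl

lemma single_shot {k d : ℕ} (hd : 2 ≤ d) (hdk : d ≤ k)
    {G : Fin 2 → SimpleGraph (Fin k)}
    (hG1 : ∀ a b : Fin k, (G 0).Adj a b ↔ a ≠ b ∧ (d ≤ a.val ∨ d ≤ b.val))
    (hG2 : G 1 = ⊥) {n : ℕ} {m : Fin 2 → ℕ}
    (hmf : FeasibleAtLength G m n) :
    (m 0 : ℝ) * (m 1 : ℝ) ^ (Real.logb k d) ≤ ((d : ℝ) ^ n) := by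
  obtain ⟨E, hE⟩ := hmf
  set Vi : Fin (m 0) → Finset (Fin n → Fin d) := fun i =>
    Finset.univ.filter (fun z => ∃ a2 : Fin (m 1), InCube (E (pr i a2)) z) with hVi
  have hdisj : ∀ i ∈ (Finset.univ : Finset (Fin (m 0))), ∀ i' ∈ Finset.univ,
      i ≠ i' → Disjoint (Vi i) (Vi i') := by
    intro i _ i' _ hne
    rw [Finset.disjoint_left]
    intro z hz hz'
    simp only [hVi, Finset.mem_filter, Finset.mem_univ, true_and] at hz hz'
    obtain ⟨a2, h1⟩ := hz
    obtain ⟨b2, h2⟩ := hz'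
    have hab : (pr i a2) 0 ≠ (pr i' b2) 0 := by simpa using hne
    obtain ⟨t, hEne, hnadj⟩ := hE 0 _ _ hab
    have hor : ¬ (d ≤ (E (pr i a2) t : ℕ) ∨ d ≤ (E (pr i' b2) t : ℕ)) :=
      fun hor => hnadj ((hG1 _ _).2 ⟨hEne, hor⟩)
    push_neg at hor
    have e1 := h1 t hor.1
    have e2 := h2 t hor.2
    exact hEne (Fin.ext (by rw [← e1, ← e2]))
  have hinj : ∀ i : Fin (m 0), Function.Injective (fun a2 : Fin (m 1) => E (pr i a2)) := by
    intro i a2 b2 h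
    by_contra hne
    have hab : (pr i a2) 1 ≠ (pr i b2) 1 := by simpa using hne
    obtain ⟨t, hEne, _⟩ := hE 1 _ _ hab
    exact hEne (congrFun h t)
  have hcard : ∀ i : Fin (m 0), m 1 ≤ NV k d n (Vi i) := by
    intro i
    have hsub : (Finset.univ.image (fun a2 : Fin (m 1) => E (pr i a2)))
        ⊆ Finset.univ.filter
          (fun x : Fin n → Fin k => ∀ z, InCube x z → z ∈ Vi i) := by
      intro x hx
      simp only [Finset.mem_image, Finset.mem_univ, true_and] at hx
      obtain ⟨a2, rfl⟩ := hx
      simp only [Finset.mem_filter, Finset.mem_univ, true_and]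
      intro z hz
      simp only [hVi, Finset.mem_filter, Finset.mem_univ, true_and]
      exact ⟨a2, hz⟩
    have hle := Finset.card_le_card hsub
    rw [Finset.card_image_of_injective _ (hinj i), Finset.card_univ,
      Fintype.card_fin] at hle
    exact hle
  -- real analysis part
  have hd1 : (1:ℝ) < (d:ℝ) := by exact_mod_cast hd.trans_lt' one_lt_two
  have hk1 : (1:ℝ) < (k:ℝ) := by
    have : 2 ≤ k := hd.trans hdk
    exact_mod_cast this.trans_lt' one_lt_two
  have hlam : Real.logb d k * Real.logb k d = 1 := by
    rw [Real.logb, Real.logb]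
    have h1 : Real.log d ≠ 0 := ne_of_gt (Real.log_pos hd1)
    have h2 : Real.log k ≠ 0 := ne_of_gt (Real.log_pos hk1)
    field_simp
  have hstep : ∀ i : Fin (m 0), ((m 1 : ℝ)) ^ Real.logb k d ≤ ((Vi i).card : ℝ) := by
    intro i
    have h0 : (0:ℝ) ≤ (m 1 : ℝ) := by positivity
    have hchain : (m 1 : ℝ) ≤ ((Vi i).card : ℝ) ^ Real.logb d k := by
      refine le_trans ?_ (NV_le hd hdk n (Vi i))
      exact_mod_cast hcard i
    have hmono := Real.rpow_le_rpow h0 hchain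
      (Real.logb_nonneg (b := (k:ℝ)) hk1 (by linarith : (1:ℝ) ≤ (d:ℝ)))
    rwa [← Real.rpow_mul (by positivity), hlam, Real.rpow_one] at hmono
  have hsum : ∑ i : Fin (m 0), ((Vi i).card : ℝ) ≤ ((d:ℝ)) ^ n := by
    have hN : ∑ i : Fin (m 0), (Vi i).card ≤ d ^ n := by
      classical
      rw [← Finset.card_biUnion hdisj]
      calc (Finset.univ.biUnion Vi).card
          ≤ (Finset.univ : Finset (Fin n → Fin d)).card := Finset.card_le_univ _
        _ = d ^ n := by rw [Finset.card_univ, Fintype.card_fun, Fintype.card_fin,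
            Fintype.card_fin]
    exact_mod_cast hN
  calc (m 0 : ℝ) * (m 1 : ℝ) ^ Real.logb k d
      = ∑ _i : Fin (m 0), (m 1 : ℝ) ^ Real.logb k d := by
        rw [Finset.sum_const, Finset.card_univ, Fintype.card_fin, nsmul_eq_mul]
    _ ≤ ∑ i : Fin (m 0), ((Vi i).card : ℝ) := Finset.sum_le_sum (fun i _ => hstep i)
    _ ≤ ((d:ℝ)) ^ n := hsum

lemma rate_bound {k d : ℕ} (hd : 2 ≤ d) (hdk : d ≤ k)
    {G : Fin 2 → SimpleGraph (Fin k)}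
    (hG1 : ∀ a b : Fin k, (G 0).Adj a b ↔ a ≠ b ∧ (d ≤ a.val ∨ d ≤ b.val))
    (hG2 : G 1 = ⊥) {R : Fin 2 → ℝ} (hR : FeasibleRate G R) :
    R 0 * Real.logb 2 k + R 1 * Real.logb 2 d ≤ Real.logb 2 d * Real.logb 2 k := by
  obtain ⟨hRnn, m, hmpos, hfeas, hlim⟩ := hR
  have hd1 : (1:ℝ) < (d:ℝ) := by exact_mod_cast hd.trans_lt' one_lt_two
  have hk1 : (1:ℝ) < (k:ℝ) := by
    have : 2 ≤ k := hd.trans hdk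
    exact_mod_cast this.trans_lt' one_lt_two
  have hlogd : (0:ℝ) < Real.log d := Real.log_pos hd1
  have hlogk : (0:ℝ) < Real.log k := Real.log_pos hk1
  have hlog2 : (0:ℝ) < Real.log 2 := Real.log_pos one_lt_two
  have key : ∀ nn : ℕ, 1 ≤ nn →
      (Real.logb 2 (m nn 0) / nn) * Real.logb 2 k
        + (Real.logb 2 (m nn 1) / nn) * Real.logb 2 d
      ≤ Real.logb 2 d * Real.logb 2 k := by
    intro nn hn
    have hM0 : (1:ℝ) ≤ (m nn 0 : ℝ) := by exact_mod_cast hmpos nn 0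
    have hM1 : (1:ℝ) ≤ (m nn 1 : ℝ) := by exact_mod_cast hmpos nn 1
    have hM0p : (0:ℝ) < (m nn 0 : ℝ) := by linarith
    have hM1p : (0:ℝ) < (m nn 1 : ℝ) := by linarith
    have hss := single_shot hd hdk hG1 hG2 (hfeas nn)
    have h1 : Real.log ((m nn 0 : ℝ) * (m nn 1 : ℝ) ^ Real.logb k d)
        ≤ Real.log ((d:ℝ) ^ nn) := Real.log_le_log (by positivity) hss
    rw [Real.log_mul (by positivity) (by positivity), Real.log_rpow hM1p,
      Real.log_pow, Real.logb] at h1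
    -- h1 : log m0 + (log d / log k) * log m1 ≤ nn * log d
    have hlogs : Real.log (m nn 0) * Real.log k + Real.log (m nn 1) * Real.log d
        ≤ (nn : ℝ) * (Real.log d * Real.log k) := by
      have h2 := mul_le_mul_of_nonneg_right h1 hlogk.le
      have h3 : Real.log d / Real.log k * Real.log (m nn 1) * Real.log k
          = Real.log (m nn 1) * Real.log d := by
        rw [div_mul_eq_mul_div, div_mul_eq_mul_div, div_eq_iff (ne_of_gt hlogk)]
        ring
      linarith [h2, h3]
    have hnpos : (0:ℝ) < (nn : ℝ) := by exact_mod_cast hn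
    simp only [Real.logb]
    have hL2 : Real.log 2 ≠ 0 := ne_of_gt hlog2
    have hnne : ((nn : ℕ) : ℝ) ≠ 0 := ne_of_gt hnpos
    have e1 : Real.log (m nn 0) / Real.log 2 / nn * (Real.log k / Real.log 2)
        + Real.log (m nn 1) / Real.log 2 / nn * (Real.log d / Real.log 2)
        = (Real.log (m nn 0) * Real.log k + Real.log (m nn 1) * Real.log d)
          / (nn * (Real.log 2 * Real.log 2)) := by
      rw [div_div, div_div, div_mul_div_comm, div_mul_div_comm, ← add_div,
        show (Real.log 2 * (nn:ℝ)) * Real.log 2 = (nn:ℝ) * (Real.log 2 * Real.log 2) by ring]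
    rw [e1, div_mul_div_comm, div_le_div_iff₀ (by positivity) (by positivity)]
    nlinarith [mul_le_mul_of_nonneg_right hlogs (le_of_lt (mul_pos hlog2 hlog2))]
  have hlimAll : Filter.Tendsto
      (fun nn : ℕ => (Real.logb 2 (m nn 0) / nn) * Real.logb 2 k
        + (Real.logb 2 (m nn 1) / nn) * Real.logb 2 d) Filter.atTop
      (nhds (R 0 * Real.logb 2 k + R 1 * Real.logb 2 d)) :=
    ((hlim 0).mul_const _).add ((hlim 1).mul_const _)
  exact le_of_tendsto hlimAll (Filter.eventually_atTop.2 ⟨1, key⟩)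

end Converse
section Direct

lemma feasible_timeshare {k d : ℕ} (hd : 2 ≤ d) (hdk : d ≤ k)
    {G : Fin 2 → SimpleGraph (Fin k)}
    (hG1 : ∀ a b : Fin k, (G 0).Adj a b ↔ a ≠ b ∧ (d ≤ a.val ∨ d ≤ b.val))
    (hG2 : G 1 = ⊥) (α : ℝ) (hα0 : 0 ≤ α) (hα1 : α ≤ 1) :
    FeasibleRate G ![α * Real.logb 2 d, (1 - α) * Real.logb 2 k] := by
  have hd1 : (1:ℝ) < (d:ℝ) := by exact_mod_cast hd.trans_lt' one_lt_two
  have hk1 : (1:ℝ) < (k:ℝ) := by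
    have : 2 ≤ k := hd.trans hdk
    exact_mod_cast this.trans_lt' one_lt_two
  have hfloor_le : ∀ n : ℕ, ⌊α * (n:ℝ)⌋₊ ≤ n := by
    intro n
    have h1 : α * (n:ℝ) ≤ (n:ℝ) := by
      nlinarith [show (0:ℝ) ≤ (n:ℝ) from Nat.cast_nonneg n]
    calc ⌊α * (n:ℝ)⌋₊ ≤ ⌊((n:ℕ) : ℝ)⌋₊ := Nat.floor_mono h1
      _ = n := Nat.floor_natCast n
  constructor
  · intro i
    fin_cases i
    · simp only [Matrix.cons_val_zero]
      exact mul_nonneg hα0 (Real.logb_nonneg one_lt_two hd1.le)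
    · simp only [Matrix.cons_val_one, Matrix.head_cons]
      exact mul_nonneg (by linarith) (Real.logb_nonneg one_lt_two hk1.le)
  refine ⟨fun n => ![d ^ (⌊α * (n:ℝ)⌋₊), k ^ (n - ⌊α * (n:ℝ)⌋₊)], ?_, ?_, ?_⟩
  · intro n i
    fin_cases i
    · simp only [Matrix.cons_val_zero]
      exact pow_pos (by omega) _
    · simp only [Matrix.cons_val_one, Matrix.head_cons]
      exact pow_pos (by omega) _
  · -- feasibility at each length
    intro n
    set s := ⌊α * (n:ℝ)⌋₊ with hs
    have hsn : s ≤ n := hfloor_le n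
    have e0 : (![d ^ s, k ^ (n - s)] : Fin 2 → ℕ) 0 = d ^ s := rfl
    have e1 : (![d ^ s, k ^ (n - s)] : Fin 2 → ℕ) 1 = k ^ (n - s) := rfl
    set E : (∀ i : Fin 2, Fin ((![d ^ s, k ^ (n - s)] : Fin 2 → ℕ) i)) → (Fin n → Fin k) :=
      fun a t =>
        if h : (t : ℕ) < s then
          Fin.castLE hdk (finFunctionFinEquiv.symm (finCongr e0 (a 0)) ⟨(t : ℕ), h⟩)
        else
          finFunctionFinEquiv.symm (finCongr e1 (a 1))
            ⟨(t : ℕ) - s, by have := t.isLt; omega⟩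
      with hE
    have Elow : ∀ a (t : Fin n) (h : (t : ℕ) < s),
        E a t = Fin.castLE hdk (finFunctionFinEquiv.symm (finCongr e0 (a 0)) ⟨(t : ℕ), h⟩) := by
      intro a t h
      simp only [hE]
      rw [dif_pos h]
    have Ehigh : ∀ a (t : Fin n) (h : ¬ (t : ℕ) < s),
        E a t = finFunctionFinEquiv.symm (finCongr e1 (a 1))
          ⟨(t : ℕ) - s, by have := t.isLt; omega⟩ := by
      intro a t h
      simp only [hE]
      rw [dif_neg h]
    refine ⟨E, ?_⟩
    intro i a b hab
    fin_cases i
    · -- user 0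
      simp only [Fin.zero_eta] at hab ⊢
      have hne : finFunctionFinEquiv.symm (finCongr e0 (a 0))
          ≠ finFunctionFinEquiv.symm (finCongr e0 (b 0)) :=
        fun h => hab ((finCongr e0).injective (finFunctionFinEquiv.symm.injective h))
      obtain ⟨t', ht'⟩ := Function.ne_iff.1 hne
      refine ⟨⟨(t' : ℕ), lt_of_lt_of_le t'.isLt hsn⟩, ?_, ?_⟩
      · rw [Elow a _ t'.isLt, Elow b _ t'.isLt]
        simp only [Fin.eta]
        exact fun hEq => ht' (Fin.castLE_injective hdk hEq)
      · rw [Elow a _ t'.isLt, hG1]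
        rintro ⟨-, hor⟩
        rcases hor with h | h
        · rw [Fin.coe_castLE] at h
          exact absurd h (not_le.2 (Fin.is_lt _))
        · rw [Elow b _ t'.isLt, Fin.coe_castLE] at h
          exact absurd h (not_le.2 (Fin.is_lt _))
    · -- user 1
      simp only [Fin.mk_one] at hab ⊢
      have hne : finFunctionFinEquiv.symm (finCongr e1 (a 1))
          ≠ finFunctionFinEquiv.symm (finCongr e1 (b 1)) :=
        fun h => hab ((finCongr e1).injective (finFunctionFinEquiv.symm.injective h))
      obtain ⟨t', ht'⟩ := Function.ne_iff.1 hne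
      have htlt : s + (t' : ℕ) < n := by have := t'.isLt; omega
      have hnotlt : ¬ ((⟨s + (t' : ℕ), htlt⟩ : Fin n) : ℕ) < s := by
        simp only [Fin.val_mk]
        omega
      have hidx : (⟨((⟨s + (t' : ℕ), htlt⟩ : Fin n) : ℕ) - s,
          by have := (⟨s + (t' : ℕ), htlt⟩ : Fin n).isLt; omega⟩ : Fin (n - s)) = t' := by
        apply Fin.ext
        simp only [Fin.val_mk]
        omega
      refine ⟨⟨s + (t' : ℕ), htlt⟩, ?_, ?_⟩
      · rw [Ehigh a _ hnotlt, Ehigh b _ hnotlt, hidx]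
        exact ht'
      · rw [hG2]
        simp
  · -- limits
    have hfl : Filter.Tendsto (fun n : ℕ => ((⌊α * (n:ℝ)⌋₊ : ℕ) : ℝ) / (n:ℝ))
        Filter.atTop (nhds α) :=
      (tendsto_nat_floor_mul_div_atTop hα0).comp tendsto_natCast_atTop_atTop
    intro i
    fin_cases i
    · simp only [Fin.zero_eta, Matrix.cons_val_zero]
      refine (hfl.mul_const (Real.logb 2 d)).congr (fun n => ?_)
      rw [Nat.cast_pow, Real.logb_pow]
      ring
    · simp only [Fin.mk_one, Matrix.cons_val_one, Matrix.head_cons]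
      have hbase : Filter.Tendsto
          (fun n : ℕ => (1 - ((⌊α * (n:ℝ)⌋₊ : ℕ) : ℝ) / (n:ℝ)) * Real.logb 2 k)
          Filter.atTop (nhds ((1 - α) * Real.logb 2 k)) :=
        (tendsto_const_nhds.sub hfl).mul_const _
      refine hbase.congr' ?_
      filter_upwards [Filter.eventually_ge_atTop 1] with n hn
      have hn0 : ((n:ℕ) : ℝ) ≠ 0 := by
        have : (0:ℝ) < n := by exact_mod_cast hn
        linarith
      rw [Matrix.cons_val_zero, Nat.cast_pow, Real.logb_pow, Nat.cast_sub (hfloor_le n)]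
      field_simp

end Direct

/-- Theorem 7: user 1 has the complete graph on `Σ_k` minus a clique on `Σ_d` (two distinct
letters are adjacent iff at least one lies outside the first `d` letters) and user 2 has the
empty confusion graph. Then for every `α ∈ [0,1]` the rate vector
`(α log₂ d, (1−α) log₂ k)` is optimal; in particular it is feasible, and every feasible
`(R₁, R₂)` with `R₁ ≥ α log₂ d` satisfies `R₂ ≤ (1−α) log₂ k`. -/
theorem optimal_cliqueMinusClique_empty (k d : ℕ) (hd : 2 ≤ d) (hdk : d ≤ k)
    (G : Fin 2 → SimpleGraph (Fin k))
    (hG1 : ∀ a b : Fin k, (G 0).Adj a b ↔ a ≠ b ∧ (d ≤ a.val ∨ d ≤ b.val))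
    (hG2 : G 1 = ⊥)
    (α : ℝ) (hα : α ∈ Set.Icc (0 : ℝ) 1) :
    OptimalRate G ![α * Real.logb 2 d, (1 - α) * Real.logb 2 k] ∧
    FeasibleRate G ![α * Real.logb 2 d, (1 - α) * Real.logb 2 k] ∧
    (∀ R : Fin 2 → ℝ, FeasibleRate G R → α * Real.logb 2 d ≤ R 0 →
      R 1 ≤ (1 - α) * Real.logb 2 k) := by
  obtain ⟨hα0, hα1⟩ := hα
  have hd1 : (1:ℝ) < (d:ℝ) := by exact_mod_cast hd.trans_lt' one_lt_two
  have hk1 : (1:ℝ) < (k:ℝ) := by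
    have : 2 ≤ k := hd.trans hdk
    exact_mod_cast this.trans_lt' one_lt_two
  have hld : 0 < Real.logb 2 d := Real.logb_pos one_lt_two hd1
  have hlk : 0 < Real.logb 2 k := Real.logb_pos one_lt_two hk1
  have hfeasR := feasible_timeshare hd hdk hG1 hG2 α hα0 hα1
  have hconv : ∀ R : Fin 2 → ℝ, FeasibleRate G R → α * Real.logb 2 d ≤ R 0 →
      R 1 ≤ (1 - α) * Real.logb 2 k := by
    intro R hR hR0
    have hb := rate_bound hd hdk hG1 hG2 hR
    have h1 : α * Real.logb 2 d * Real.logb 2 k ≤ R 0 * Real.logb 2 k :=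
      mul_le_mul_of_nonneg_right hR0 hlk.le
    have h2 : R 1 * Real.logb 2 d ≤ ((1 - α) * Real.logb 2 k) * Real.logb 2 d := by
      nlinarith
    exact le_of_mul_le_mul_right h2 hld
  refine ⟨⟨hfeasR, ?_, ?_⟩, hfeasR, hconv⟩
  · rintro ⟨R1', hgt, hfeas'⟩
    have hb := rate_bound hd hdk hG1 hG2 hfeas'
    simp only [Matrix.cons_val_zero, Matrix.cons_val_one, Matrix.head_cons] at hb hgt
    nlinarith [mul_lt_mul_of_pos_right hgt hlk]
  · rintro ⟨R2', hgt, hfeas'⟩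
    have hb := rate_bound hd hdk hG1 hG2 hfeas'
    simp only [Matrix.cons_val_zero, Matrix.cons_val_one, Matrix.head_cons] at hb hgt
    nlinarith [mul_lt_mul_of_pos_right hgt hld]
end

section
/- Let 2 ≤ d ≤ (k+1)/2, let G_1 be the complete graph on Σ_k minus a clique on Σ_d, and let G_2 = complement of G_1, i.e. the graph on Σ_k whose edges are exactly the pairs {a,b} with a, b ∈ Σ_d. Then for every α ∈ [0,1] the rate vector (α·log₂ d, (1−α)·log₂(k−d+1)) is optimal; in particular it is feasible, and every feasible rate vector (R_1, R_2) with R_1 ≥ α·log₂ d satisfies R_2 ≤ (1−α)·log₂(k−d+1). -/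
section BCAux
open Real Finset Filter

/-- Submodularity of `x ↦ x^γ` for `0 < γ ≤ 1`. -/
lemma bc_submod {γ a b t : ℝ} (hγ0 : 0 < γ) (hγ1 : γ ≤ 1) (ha : 0 ≤ a)
    (hab : a ≤ b) (ht : 0 ≤ t) : (b + t) ^ γ - b ^ γ ≤ (a + t) ^ γ - a ^ γ := by
  rcases eq_or_lt_of_le hγ1 with h1 | h1
  · subst h1; simp [Real.rpow_one]
  rcases eq_or_lt_of_le ht with h2 | h2
  · subst t; simp
  rcases eq_or_lt_of_le hab with h3 | h3
  · subst h3; simp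
  have hb : 0 ≤ b := le_trans ha hab
  have hconc := (Real.strictConcaveOn_rpow hγ0 h1).concaveOn
  set s := b - a with hs
  have hst : 0 < s + t := by simp only [hs]; linarith
  set lam := s / (s + t) with hlam
  set mu := t / (s + t) with hmu
  have hlam0 : 0 ≤ lam := div_nonneg (by linarith) hst.le
  have hmu0 : 0 ≤ mu := div_nonneg ht hst.le
  have hlm : lam + mu = 1 := by rw [hlam, hmu, ← add_div]; exact div_self hst.ne'
  have hmem1 : a ∈ Set.Ici (0:ℝ) := ha
  have hmem2 : b + t ∈ Set.Ici (0:ℝ) := by simp only [Set.mem_Ici]; linarith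
  have e1 : lam * a + mu * (b + t) = a + t := by
    rw [hlam, hmu, div_mul_eq_mul_div, div_mul_eq_mul_div, ← add_div, div_eq_iff hst.ne', hs]; ring
  have e2 : mu * a + lam * (b + t) = b := by
    rw [hlam, hmu, div_mul_eq_mul_div, div_mul_eq_mul_div, ← add_div, div_eq_iff hst.ne', hs]; ring
  have c1 := hconc.2 hmem1 hmem2 hlam0 hmu0 hlm
  have c2 := hconc.2 hmem1 hmem2 hmu0 hlam0 (by linarith)
  simp only [smul_eq_mul] at c1 c2
  rw [e1] at c1
  rw [e2] at c2
  have hsum := add_le_add c1 c2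
  have e3 : lam * a ^ γ + mu * (b + t) ^ γ + (mu * a ^ γ + lam * (b + t) ^ γ)
      = (lam + mu) * (a ^ γ + (b + t) ^ γ) := by ring
  rw [e3, hlm, one_mul] at hsum
  linarith

/-- Key inequality: `(K·A + ∑ B i)^γ ≤ ∑ (A + B i)^γ` when `K^γ ≤ m`, `|index| = m`. -/
lemma bc_key {m : ℕ} {γ Kr A : ℝ} (hγ0 : 0 < γ) (hγ1 : γ ≤ 1) (hKr : 1 ≤ Kr)
    (hKd : Kr ^ γ ≤ (m : ℝ)) (hA : 0 ≤ A) (B : Fin m → ℝ) (hB : ∀ i, 0 ≤ B i) :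
    (Kr * A + ∑ i, B i) ^ γ ≤ ∑ i, (A + B i) ^ γ := by
  have haux : ∀ S : Finset (Fin m),
      (Kr * A + ∑ i ∈ S, B i) ^ γ + (S.card : ℝ) * A ^ γ ≤
        (m : ℝ) * A ^ γ + ∑ i ∈ S, (A + B i) ^ γ := by
    intro S
    induction S using Finset.induction_on with
    | empty =>
      simp only [Finset.sum_empty, Finset.card_empty, Nat.cast_zero, zero_mul, add_zero]
      calc (Kr * A) ^ γ = Kr ^ γ * A ^ γ := Real.mul_rpow (by linarith) hA
        _ ≤ (m : ℝ) * A ^ γ := by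
            have := Real.rpow_nonneg hA γ
            nlinarith
    | @insert j S hj ih =>
      rw [Finset.sum_insert hj, Finset.sum_insert hj, Finset.card_insert_of_notMem hj]
      have hSB : 0 ≤ ∑ i ∈ S, B i := Finset.sum_nonneg fun i _ => hB i
      have hsub : (Kr * A + ∑ i ∈ S, B i + B j) ^ γ - (Kr * A + ∑ i ∈ S, B i) ^ γ ≤
          (A + B j) ^ γ - A ^ γ := by
        have h1 : A ≤ Kr * A + ∑ i ∈ S, B i := by nlinarith
        have h2 := bc_submod hγ0 hγ1 hA h1 (hB j)
        have e : A + B j = A + B j := rfl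
        calc (Kr * A + ∑ i ∈ S, B i + B j) ^ γ - (Kr * A + ∑ i ∈ S, B i) ^ γ
            = ((Kr * A + ∑ i ∈ S, B i) + B j) ^ γ - (Kr * A + ∑ i ∈ S, B i) ^ γ := by ring_nf
          _ ≤ (A + B j) ^ γ - A ^ γ := h2
      push_cast
      have : Kr * A + (B j + ∑ i ∈ S, B i) = Kr * A + ∑ i ∈ S, B i + B j := by ring
      rw [this]
      nlinarith [ih]
  have := haux Finset.univ
  simp only [Finset.card_univ, Fintype.card_fin] at this
  linarith

lemma bc_row (D W : ℕ) (γ : ℝ) (hγ0 : 0 < γ) (hγ1 : γ ≤ 1)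
    (hWD : ((W : ℝ) + 1) ^ γ ≤ (D : ℝ)) :
    ∀ (n : ℕ) (B : Finset (Finset (Fin n))) (v : Finset (Fin n) → Fin n → Fin D),
    ((∑ S ∈ B, W ^ (n - S.card) : ℕ) : ℝ) ^ γ ≤
      ((B.biUnion (fun S => Finset.univ.filter
        (fun w : Fin n → Fin D => ∀ t ∈ S, w t = v S t))).card : ℝ) := by
  intro n
  induction n with
  | zero =>
    intro B v
    have hempty : ∀ S : Finset (Fin 0), S = ∅ :=
      fun S => Finset.eq_empty_of_forall_notMem (fun x _ => x.elim0)
    rcases B.eq_empty_or_nonempty with hB | ⟨S0, hS0⟩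
    · subst hB
      simp only [Finset.sum_empty, Nat.cast_zero, Finset.biUnion_empty, Finset.card_empty]
      rw [Real.zero_rpow hγ0.ne']
    · have hBsub : B = {∅} := by
        apply Finset.Subset.antisymm
        · intro S hS; simp [hempty S]
        · intro S hS; simp only [Finset.mem_singleton] at hS; subst hS
          rwa [← hempty S0]
      subst hBsub
      have hcard : (univ : Finset (Fin 0 → Fin D)).card = 1 := by simp
      simp only [Finset.sum_singleton, Finset.card_empty, Nat.sub_zero, pow_zero,
        Nat.cast_one, Real.one_rpow, Finset.singleton_biUnion]
      have : (Finset.univ.filter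
          (fun w : Fin 0 → Fin D => ∀ t ∈ (∅ : Finset (Fin 0)), w t = v ∅ t)) = univ := by
        apply Finset.filter_true_of_mem; intro w _; intro t ht; exact absurd ht (by simp)
      rw [this, hcard]; norm_num
  | succ n IH =>
    intro B v
    classical
    set last : Fin (n+1) := Fin.last n with hlastdef
    set proj : Finset (Fin (n+1)) → Finset (Fin n) :=
      fun T => Finset.univ.filter (fun t => t.castSucc ∈ T) with hprojdef
    set emb : Finset (Fin n) → Finset (Fin (n+1)) :=
      fun S => S.image Fin.castSucc with hembdef
    have memproj : ∀ (T : Finset (Fin (n+1))) (t : Fin n), t ∈ proj T ↔ t.castSucc ∈ T := by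
      intro T t; simp [hprojdef]
    have hembproj : ∀ T : Finset (Fin (n+1)), emb (proj T) = T.erase last := by
      intro T
      ext t
      simp only [hembdef, Finset.mem_image, Finset.mem_erase]
      constructor
      · rintro ⟨t', ht', rfl⟩
        exact ⟨(Fin.castSucc_lt_last t').ne, (memproj T t').1 ht'⟩
      · rintro ⟨hne, ht⟩
        obtain ⟨t', rfl⟩ := Fin.exists_castSucc_eq.2 hne
        exact ⟨t', (memproj T t').2 ht, rfl⟩
    have hembcard : ∀ S : Finset (Fin n), (emb S).card = S.card := by
      intro S; exact Finset.card_image_of_injective S (Fin.castSucc_injective n)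
    have hprojemb : ∀ S : Finset (Fin n), proj (emb S) = S := by
      intro S; ext t
      simp only [memproj, hembdef, Finset.mem_image]
      constructor
      · rintro ⟨t', ht', het⟩
        rwa [Fin.castSucc_injective n het] at ht'
      · intro ht; exact ⟨t, ht, rfl⟩
    set B0 : Finset (Finset (Fin (n+1))) := B.filter (fun T => last ∉ T) with hB0def
    set Bc : Fin D → Finset (Finset (Fin (n+1))) :=
      fun c => B.filter (fun T => last ∈ T ∧ v T last = c) with hBcdef
    set kept : Fin D → Finset (Finset (Fin (n+1))) :=
      fun c => (Bc c).filter (fun T => T.erase last ∉ B) with hkeptdef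
    set Gc : Fin D → Finset (Finset (Fin n)) :=
      fun c => B0.image proj ∪ (kept c).image proj with hGcdef
    set v' : Finset (Fin n) → Fin n → Fin D := fun S t =>
      if emb S ∈ B then v (emb S) t.castSucc else v (insert last (emb S)) t.castSucc with hv'def
    set A : ℕ := ∑ T ∈ B0, W ^ (n - T.card) with hAdef
    set Bc' : Fin D → ℕ := fun c => ∑ T ∈ kept c, W ^ (n - (T.card - 1)) with hBc'def
    -- facts about membership in B0 / kept images
    have hmemB0 : ∀ T ∈ B0, emb (proj T) = T ∧ T ∈ B ∧ last ∉ T := by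
      intro T hT
      simp only [hB0def, Finset.mem_filter] at hT
      exact ⟨by rw [hembproj]; exact Finset.erase_eq_of_notMem hT.2, hT.1, hT.2⟩
    have hmemkept : ∀ c, ∀ T ∈ kept c, insert last (emb (proj T)) = T ∧ T ∈ B ∧
        last ∈ T ∧ v T last = c ∧ T.erase last ∉ B := by
      intro c T hT
      simp only [hkeptdef, hBcdef, Finset.mem_filter] at hT
      refine ⟨?_, hT.1.1, hT.1.2.1, hT.1.2.2, hT.2⟩
      rw [hembproj]; exact Finset.insert_erase hT.1.2.1
    -- disjointness of the two image parts of Gc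
    have hGdisj : ∀ c, Disjoint (B0.image proj) ((kept c).image proj) := by
      intro c
      rw [Finset.disjoint_left]
      rintro S hS1 hS2
      obtain ⟨T1, hT1, rfl⟩ := Finset.mem_image.1 hS1
      obtain ⟨T2, hT2, hPT⟩ := Finset.mem_image.1 hS2
      obtain ⟨he1, hT1B, _⟩ := hmemB0 T1 hT1
      obtain ⟨_, _, _, _, hT2e⟩ := hmemkept c T2 hT2
      apply hT2e
      have : emb (proj T2) = T1 := by rw [hPT, he1]
      rw [hembproj] at this
      rwa [this]
    -- injectivity of proj on B0 and kept c
    have hinjB0 : ∀ T1 ∈ B0, ∀ T2 ∈ B0, proj T1 = proj T2 → T1 = T2 := by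
      intro T1 h1 T2 h2 h
      have e1 := (hmemB0 T1 h1).1; have e2 := (hmemB0 T2 h2).1
      rw [← e1, ← e2, h]
    have hinjkept : ∀ c, ∀ T1 ∈ kept c, ∀ T2 ∈ kept c, proj T1 = proj T2 → T1 = T2 := by
      intro c T1 h1 T2 h2 h
      have e1 := (hmemkept c T1 h1).1; have e2 := (hmemkept c T2 h2).1
      rw [← e1, ← e2, h]
    -- M(G c) = A + Bc' c
    have hMGc : ∀ c, ∑ S ∈ Gc c, W ^ (n - S.card) = A + Bc' c := by
      intro c
      rw [hGcdef]
      rw [Finset.sum_union (hGdisj c)]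
      congr 1
      · rw [Finset.sum_image (hinjB0)]
        apply Finset.sum_congr rfl
        intro T hT
        obtain ⟨he, _, hlst⟩ := hmemB0 T hT
        have : (proj T).card = T.card := by
          rw [← hembcard (proj T), he]
        rw [this]
      · rw [Finset.sum_image (hinjkept c)]
        apply Finset.sum_congr rfl
        intro T hT
        obtain ⟨he, _, hlst, _, _⟩ := hmemkept c T hT
        have : (proj T).card = T.card - 1 := by
          rw [← hembcard (proj T), hembproj, Finset.card_erase_of_mem hlst]
        rw [this]
    -- Extension sets at level n (with values v') and level n+1 (values v)
    set Ext' : Finset (Fin n) → Finset (Fin n → Fin D) := fun S =>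
      Finset.univ.filter (fun w : Fin n → Fin D => ∀ t ∈ S, w t = v' S t) with hExt'def
    set U' : Fin D → Finset (Fin n → Fin D) := fun c => (Gc c).biUnion Ext' with hU'def
    set UB : Finset (Fin (n+1) → Fin D) := B.biUnion (fun S => Finset.univ.filter
        (fun w : Fin (n+1) → Fin D => ∀ t ∈ S, w t = v S t)) with hUBdef
    -- (R4) card chain
    have hcard : ∑ c : Fin D, (U' c).card ≤ UB.card := by
      rw [← Finset.card_sigma Finset.univ U']
      apply Finset.card_le_card_of_injOn (fun p => Fin.snoc p.2 p.1)
      · rintro ⟨c, w⟩ hp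
        simp only [Finset.mem_coe, Finset.mem_sigma, Finset.mem_univ, true_and] at hp
        obtain ⟨S, hS, hw⟩ := Finset.mem_biUnion.1 hp
        have hw' : ∀ t ∈ S, w t = v' S t := (Finset.mem_filter.1 hw).2
        rcases Finset.mem_union.1 hS with hS1 | hS1
        · obtain ⟨T, hT, rfl⟩ := Finset.mem_image.1 hS1
          obtain ⟨heT, hTB, hlst⟩ := hmemB0 T hT
          refine Finset.mem_biUnion.2 ⟨T, hTB, Finset.mem_filter.2 ⟨Finset.mem_univ _, ?_⟩⟩
          intro t ht
          have htne : t ≠ last := fun h => hlst (h ▸ ht)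
          obtain ⟨t', rfl⟩ := Fin.exists_castSucc_eq.2 htne
          have ht' : t' ∈ proj T := (memproj T t').2 ht
          have hvw := hw' t' ht'
          have hembB : emb (proj T) ∈ B := by rw [heT]; exact hTB
          simp only [Fin.snoc_castSucc]
          rw [hvw]
          simp only [hv'def, if_pos hembB]
          rw [heT]
        · obtain ⟨T, hT, rfl⟩ := Finset.mem_image.1 hS1
          obtain ⟨heT, hTB, hlst, hvc, hTe⟩ := hmemkept c T hT
          refine Finset.mem_biUnion.2 ⟨T, hTB, Finset.mem_filter.2 ⟨Finset.mem_univ _, ?_⟩⟩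
          intro t ht
          by_cases htl : t = last
          · subst htl
            simp only [hlastdef, Fin.snoc_last]
            rw [← hlastdef, hvc]
          · obtain ⟨t', rfl⟩ := Fin.exists_castSucc_eq.2 htl
            have ht' : t' ∈ proj T := (memproj T t').2 ht
            have hvw := hw' t' ht'
            have hembB : emb (proj T) ∉ B := by rw [hembproj]; exact hTe
            simp only [Fin.snoc_castSucc]
            rw [hvw]
            simp only [hv'def, if_neg hembB]
            rw [heT]
      · rintro ⟨c1, w1⟩ hp ⟨c2, w2⟩ hq h
        simp only at h
        have h1 : c1 = c2 := by
          have := congrArg (fun f => f last) h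
          simpa [hlastdef, Fin.snoc_last] using this
        subst h1
        have h2 : w1 = w2 := by
          funext t
          have := congrArg (fun f => f t.castSucc) h
          simpa [Fin.snoc_castSucc] using this
        subst h2
        rfl
    -- (R5) weight accounting
    have hM : (∑ T ∈ B, W ^ (n + 1 - T.card)) ≤ (W + 1) * A + ∑ c : Fin D, Bc' c := by
      have hsplit : (∑ T ∈ B, W ^ (n + 1 - T.card)) =
          (∑ T ∈ B0, W ^ (n + 1 - T.card)) +
          (∑ T ∈ B.filter (fun T => last ∈ T), W ^ (n + 1 - T.card)) := by
        have h0 := Finset.sum_filter_add_sum_filter_not B (fun T => last ∈ T)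
          (fun T => W ^ (n + 1 - T.card))
        rw [hB0def]
        linarith [h0]
      have hB0part : (∑ T ∈ B0, W ^ (n + 1 - T.card)) = W * A := by
        rw [hAdef, Finset.mul_sum]
        apply Finset.sum_congr rfl
        intro T hT
        obtain ⟨_, _, hlst⟩ := hmemB0 T hT
        have hTcard : T.card ≤ n := by
          have : T ⊆ Finset.univ.erase last := by
            intro t ht
            exact Finset.mem_erase.2 ⟨fun h => hlst (h ▸ ht), Finset.mem_univ t⟩
          have := Finset.card_le_card this
          rwa [Finset.card_erase_of_mem (Finset.mem_univ last), Finset.card_univ,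
            Fintype.card_fin, Nat.add_sub_cancel] at this
        have : n + 1 - T.card = (n - T.card) + 1 := by omega
        rw [this, pow_succ]
        ring
      have hfiber : (∑ T ∈ B.filter (fun T => last ∈ T), W ^ (n + 1 - T.card)) =
          ∑ c : Fin D, ∑ T ∈ Bc c, W ^ (n + 1 - T.card) := by
        rw [← Finset.sum_fiberwise (B.filter (fun T => last ∈ T)) (fun T => v T last)
          (fun T => W ^ (n + 1 - T.card))]
        apply Finset.sum_congr rfl
        intro c _
        apply Finset.sum_congr _ (fun _ _ => rfl)
        rw [hBcdef, Finset.filter_filter]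
      have hBcsplit : ∀ c : Fin D, (∑ T ∈ Bc c, W ^ (n + 1 - T.card)) =
          Bc' c + (∑ T ∈ (Bc c).filter (fun T => T.erase last ∈ B), W ^ (n + 1 - T.card)) := by
        intro c
        have h0 := Finset.sum_filter_add_sum_filter_not (Bc c) (fun T => T.erase last ∈ B)
          (fun T => W ^ (n + 1 - T.card))
        have e1 : Bc' c =
            ∑ T ∈ (Bc c).filter (fun T => ¬ T.erase last ∈ B), W ^ (n + 1 - T.card) := by
          rw [hBc'def, hkeptdef]
          apply Finset.sum_congr rfl
          intro T hT
          simp only [hBcdef, Finset.mem_filter] at hT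
          have h1 : 1 ≤ T.card := Finset.card_pos.2 ⟨last, hT.1.2.1⟩
          congr 1
          omega
        rw [e1]
        linarith [h0]
      have hdropped : (∑ c : Fin D, ∑ T ∈ (Bc c).filter (fun T => T.erase last ∈ B),
          W ^ (n + 1 - T.card)) ≤ A := by
        set Dall : Finset (Finset (Fin (n+1))) :=
          B.filter (fun T => last ∈ T ∧ T.erase last ∈ B) with hDalldef
        have e1 : (∑ c : Fin D, ∑ T ∈ (Bc c).filter (fun T => T.erase last ∈ B),
            W ^ (n + 1 - T.card)) = ∑ T ∈ Dall, W ^ (n + 1 - T.card) := by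
          rw [← Finset.sum_fiberwise Dall (fun T => v T last) (fun T => W ^ (n + 1 - T.card))]
          apply Finset.sum_congr rfl
          intro c _
          apply Finset.sum_congr _ (fun _ _ => rfl)
          rw [hDalldef, hBcdef, Finset.filter_filter, Finset.filter_filter]
          apply Finset.filter_congr
          intro T _
          constructor
          · rintro ⟨⟨h1, h2⟩, h3⟩; exact ⟨⟨h1, h3⟩, h2⟩
          · rintro ⟨⟨h1, h3⟩, h2⟩; exact ⟨⟨h1, h2⟩, h3⟩
        rw [e1]
        have einj : ∀ T1 ∈ Dall, ∀ T2 ∈ Dall, T1.erase last = T2.erase last → T1 = T2 := by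
          intro T1 h1 T2 h2 h
          simp only [hDalldef, Finset.mem_filter] at h1 h2
          rw [← Finset.insert_erase h1.2.1, h, Finset.insert_erase h2.2.1]
        have e2 : (∑ T ∈ Dall, W ^ (n + 1 - T.card)) =
            ∑ S ∈ Dall.image (fun T => T.erase last), W ^ (n - S.card) := by
          rw [Finset.sum_image einj]
          apply Finset.sum_congr rfl
          intro T hT
          simp only [hDalldef, Finset.mem_filter] at hT
          rw [Finset.card_erase_of_mem hT.2.1]
          congr 1
          have h1 : 1 ≤ T.card := Finset.card_pos.2 ⟨last, hT.2.1⟩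
          omega
        rw [e2, hAdef]
        apply Finset.sum_le_sum_of_subset
        intro S hS
        obtain ⟨T, hT, rfl⟩ := Finset.mem_image.1 hS
        simp only [hDalldef, Finset.mem_filter] at hT
        rw [hB0def, Finset.mem_filter]
        exact ⟨hT.2.2, Finset.notMem_erase last T⟩
      calc (∑ T ∈ B, W ^ (n + 1 - T.card))
          = (∑ T ∈ B0, W ^ (n + 1 - T.card)) +
            (∑ T ∈ B.filter (fun T => last ∈ T), W ^ (n + 1 - T.card)) := hsplit
        _ = W * A + ∑ c : Fin D, ∑ T ∈ Bc c, W ^ (n + 1 - T.card) := by rw [hB0part, hfiber]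
        _ = W * A + ∑ c : Fin D, (Bc' c + (∑ T ∈ (Bc c).filter (fun T => T.erase last ∈ B),
              W ^ (n + 1 - T.card))) := by
            congr 1
            exact Finset.sum_congr rfl (fun c _ => hBcsplit c)
        _ = W * A + (∑ c : Fin D, Bc' c) + (∑ c : Fin D, ∑ T ∈ (Bc c).filter
              (fun T => T.erase last ∈ B), W ^ (n + 1 - T.card)) := by
            rw [Finset.sum_add_distrib]; ring
        _ ≤ W * A + (∑ c : Fin D, Bc' c) + A := by
            exact Nat.add_le_add_left hdropped _
        _ = (W + 1) * A + ∑ c : Fin D, Bc' c := by ring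
    -- final chain
    have hAnn : (0:ℝ) ≤ (A : ℝ) := Nat.cast_nonneg A
    have step1 : ((∑ S ∈ B, W ^ (n + 1 - S.card) : ℕ) : ℝ) ^ γ ≤
        (((W:ℝ) + 1) * A + ∑ c : Fin D, (Bc' c : ℝ)) ^ γ := by
      apply Real.rpow_le_rpow (Nat.cast_nonneg _) _ hγ0.le
      have := hM
      have hcast : (((W + 1) * A + ∑ c : Fin D, Bc' c : ℕ) : ℝ)
          = ((W:ℝ) + 1) * A + ∑ c : Fin D, (Bc' c : ℝ) := by push_cast; ring
      rw [← hcast]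
      exact_mod_cast hM
    have step2 : (((W:ℝ) + 1) * A + ∑ c : Fin D, (Bc' c : ℝ)) ^ γ ≤
        ∑ c : Fin D, ((A : ℝ) + (Bc' c : ℝ)) ^ γ := by
      apply bc_key hγ0 hγ1 _ hWD hAnn _ (fun c => Nat.cast_nonneg _)
      have : (0:ℝ) ≤ (W : ℝ) := Nat.cast_nonneg W
      linarith
    have step3 : ∑ c : Fin D, ((A : ℝ) + (Bc' c : ℝ)) ^ γ ≤ ∑ c : Fin D, ((U' c).card : ℝ) := by
      apply Finset.sum_le_sum
      intro c _
      have := IH (Gc c) v'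
      rw [hMGc c] at this
      calc ((A:ℝ) + (Bc' c : ℝ)) ^ γ = ((A + Bc' c : ℕ) : ℝ) ^ γ := by push_cast; ring_nf
        _ ≤ _ := this
    calc ((∑ S ∈ B, W ^ (n + 1 - S.card) : ℕ) : ℝ) ^ γ
        ≤ ∑ c : Fin D, ((U' c).card : ℝ) := le_trans step1 (le_trans step2 step3)
      _ = ((∑ c : Fin D, (U' c).card : ℕ) : ℝ) := by push_cast; ring
      _ ≤ (UB.card : ℝ) := by exact_mod_cast hcard

lemma bc_finite {k : ℕ} (d n : ℕ) (hd : 2 ≤ d) (hdk : 2 * d ≤ k + 1)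
    (G : Fin 2 → SimpleGraph (Fin k))
    (hG1 : ∀ a b : Fin k, (G 0).Adj a b ↔ a ≠ b ∧ (d ≤ a.val ∨ d ≤ b.val))
    (hG2 : ∀ a b : Fin k, (G 1).Adj a b ↔ a ≠ b ∧ a.val < d ∧ b.val < d)
    (m : Fin 2 → ℕ) (hm1 : 0 < m 1)
    (hfeas : FeasibleAtLength G m n) :
    (m 0 : ℝ) * (m 1 : ℝ) ^ (Real.logb ((k - d + 1 : ℕ) : ℝ) d) ≤ (d : ℝ) ^ n := by
  classical
  have hkd : d + 1 ≤ k := by omega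
  set W : ℕ := k - d with hWdef
  have hW1 : 1 ≤ W := by omega
  have hK : (k - d + 1 : ℕ) = W + 1 := by omega
  set γ : ℝ := Real.logb ((k - d + 1 : ℕ) : ℝ) d with hγdef
  have hKcast : ((k - d + 1 : ℕ) : ℝ) = (W : ℝ) + 1 := by rw [hK]; push_cast; ring
  have hK2 : (2 : ℝ) ≤ (W : ℝ) + 1 := by
    have : (1:ℝ) ≤ (W:ℝ) := by exact_mod_cast hW1
    linarith
  have hd1 : (1:ℝ) < (d:ℝ) := by exact_mod_cast hd
  have hγ0 : 0 < γ := by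
    rw [hγdef, hKcast]
    exact Real.logb_pos (by linarith) hd1
  have hdK : (d : ℝ) ≤ (W : ℝ) + 1 := by
    have : d ≤ W + 1 := by omega
    exact_mod_cast this
  have hγ1 : γ ≤ 1 := by
    rw [hγdef, hKcast]
    calc Real.logb ((W:ℝ)+1) d ≤ Real.logb ((W:ℝ)+1) ((W:ℝ)+1) :=
          Real.logb_le_logb_of_le (by linarith) (by linarith) hdK
      _ = 1 := Real.logb_self_eq_one (by linarith)
  have hWD : ((W : ℝ) + 1) ^ γ ≤ (d : ℝ) := by
    rw [hγdef, hKcast]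
    rw [Real.rpow_logb (by linarith) (by linarith) (by linarith)]
  obtain ⟨E, hE⟩ := hfeas
  set msg : Fin (m 0) → Fin (m 1) → (∀ i : Fin 2, Fin (m i)) :=
    fun a b => Fin.cons a (Fin.cons b (fun i => i.elim0)) with hmsgdef
  set x : Fin (m 0) → Fin (m 1) → Fin n → Fin k := fun a b => E (msg a b) with hxdef
  have hrow : ∀ a a' b b', a ≠ a' → ∃ t, (x a b t).val < d ∧ (x a' b' t).val < d ∧
      x a b t ≠ x a' b' t := by
    intro a a' b b' hne
    obtain ⟨t, ht1, ht2⟩ := hE 0 (msg a b) (msg a' b') (by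
      show (msg a b) 0 ≠ (msg a' b') 0
      simpa [hmsgdef] using hne)
    rw [hG1] at ht2
    push_neg at ht2
    obtain ⟨h1, h2⟩ := ht2 ht1
    have h1' : (x a b t).val < d := h1
    have h2' : (x a' b' t).val < d := h2
    have ht1' : x a b t ≠ x a' b' t := ht1
    exact ⟨t, h1', h2', ht1'⟩
  have hcol : ∀ a a' b b', b ≠ b' → ∃ t, x a b t ≠ x a' b' t ∧
      (d ≤ (x a b t).val ∨ d ≤ (x a' b' t).val) := by
    intro a a' b b' hne
    obtain ⟨t, ht1, ht2⟩ := hE 1 (msg a b) (msg a' b') (by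
      show (msg a b) 1 ≠ (msg a' b') 1
      simpa [hmsgdef] using hne)
    rw [hG2] at ht2
    push_neg at ht2
    have ht1' : x a b t ≠ x a' b' t := ht1
    have ht2' : (x a b t).val < d → d ≤ (x a' b' t).val := ht2 ht1
    refine ⟨t, ht1', ?_⟩
    by_cases h : (x a b t).val < d
    · exact Or.inr (ht2' h)
    · exact Or.inl (by omega)
  set pat : Fin (m 0) → Fin (m 1) → Finset (Fin n) :=
    fun a b => Finset.univ.filter (fun t => (x a b t).val < d) with hpatdef
  have hmempat : ∀ a b t, t ∈ pat a b ↔ (x a b t).val < d := by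
    intro a b t; simp [hpatdef]
  set PP : Fin (m 0) → Finset (Finset (Fin n)) := fun a => Finset.univ.image (pat a) with hPPdef
  set rep : Fin (m 0) → Finset (Fin n) → Fin (m 1) :=
    fun a S => if h : ∃ b, pat a b = S then h.choose else ⟨0, hm1⟩ with hrepdef
  have hrep : ∀ a S, S ∈ PP a → pat a (rep a S) = S := by
    intro a S hS
    obtain ⟨b, _, hb⟩ := Finset.mem_image.1 hS
    have hex : ∃ b, pat a b = S := ⟨b, hb⟩
    simp only [hrepdef, dif_pos hex]
    exact hex.choose_spec
  have hdpos : 0 < d := by omega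
  set vv : Fin (m 0) → Finset (Fin n) → Fin n → Fin d := fun a S t =>
    if h : (x a (rep a S) t).val < d then ⟨(x a (rep a S) t).val, h⟩ else ⟨0, hdpos⟩
    with hvvdef
  set U : Fin (m 0) → Finset (Fin n → Fin d) := fun a => (PP a).biUnion
    (fun S => Finset.univ.filter (fun w : Fin n → Fin d => ∀ t ∈ S, w t = vv a S t))
    with hUdef
  -- m 1 ≤ M a
  have hM : ∀ a, m 1 ≤ ∑ S ∈ PP a, W ^ (n - S.card) := by
    intro a
    have hcount : (Finset.univ : Finset (Fin (m 1))).card =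
        ∑ S ∈ PP a, (Finset.univ.filter (fun b => pat a b = S)).card :=
      Finset.card_eq_sum_card_fiberwise
        (fun b _ => Finset.mem_image_of_mem (pat a) (Finset.mem_univ b))
    have hfib : ∀ S ∈ PP a,
        (Finset.univ.filter (fun b => pat a b = S)).card ≤ W ^ (n - S.card) := by
      intro S hS
      set z0 : Fin W := ⟨0, hW1⟩ with hz0
      set hi : Fin (m 1) → Fin n → Fin W := fun b t =>
        if h : d ≤ (x a b t).val then ⟨(x a b t).val - d, by
          have := (x a b t).isLt; omega⟩ else z0 with hhidef
      have hmap : ∀ b ∈ Finset.univ.filter (fun b => pat a b = S),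
          hi b ∈ Fintype.piFinset (fun t : Fin n =>
            if t ∈ S then ({z0} : Finset (Fin W)) else Finset.univ) := by
        intro b hb
        have hbS : pat a b = S := (Finset.mem_filter.1 hb).2
        rw [Fintype.mem_piFinset]
        intro t
        by_cases htS : t ∈ S
        · rw [if_pos htS]
          have : (x a b t).val < d := by rw [← hbS] at htS; exact (hmempat a b t).1 htS
          simp only [hhidef, dif_neg (by omega : ¬ d ≤ (x a b t).val)]
          exact Finset.mem_singleton_self z0
        · rw [if_neg htS]; exact Finset.mem_univ _
      have hinj : Set.InjOn hi (Finset.univ.filter (fun b => pat a b = S)) := by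
        intro b hb b' hb' heq
        by_contra hbb
        obtain ⟨t, ht1, ht2⟩ := hcol a a b b' hbb
        have hbS : pat a b = S := (Finset.mem_filter.1 (Finset.mem_coe.1 hb)).2
        have hbS' : pat a b' = S := (Finset.mem_filter.1 (Finset.mem_coe.1 hb')).2
        have h1 : d ≤ (x a b t).val := by
          rcases ht2 with h | h
          · exact h
          · by_contra hlt
            have : t ∈ pat a b := (hmempat a b t).2 (by omega)
            rw [hbS, ← hbS'] at this
            have := (hmempat a b' t).1 this
            omega
        have h2 : d ≤ (x a b' t).val := by
          by_contra hlt
          have : t ∈ pat a b' := (hmempat a b' t).2 (by omega)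
          rw [hbS', ← hbS] at this
          have := (hmempat a b t).1 this
          omega
        have := congrFun heq t
        simp only [hhidef, dif_pos h1, dif_pos h2] at this
        have hvals : (x a b t).val - d = (x a b' t).val - d := by
          exact_mod_cast congrArg Fin.val this
        have : (x a b t).val = (x a b' t).val := by omega
        exact ht1 (Fin.val_injective this)
      have hcardtarget : (Fintype.piFinset (fun t : Fin n =>
          if t ∈ S then ({z0} : Finset (Fin W)) else Finset.univ)).card = W ^ (n - S.card) := by
        rw [Fintype.card_piFinset]
        have e1 : ∀ t : Fin n, (if t ∈ S then ({z0} : Finset (Fin W)) else Finset.univ).card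
            = if t ∈ S then 1 else W := by
          intro t
          by_cases h : t ∈ S
          · rw [if_pos h, if_pos h, Finset.card_singleton]
          · rw [if_neg h, if_neg h, Finset.card_univ, Fintype.card_fin]
        rw [Finset.prod_congr rfl (fun t _ => e1 t)]
        rw [← Finset.prod_filter_mul_prod_filter_not Finset.univ (fun t => t ∈ S)]
        have e2 : (∏ t ∈ Finset.univ.filter (fun t => t ∈ S), if t ∈ S then 1 else W) = 1 := by
          apply Finset.prod_eq_one
          intro t ht
          rw [if_pos (Finset.mem_filter.1 ht).2]
        have e3 : (∏ t ∈ Finset.univ.filter (fun t => ¬ t ∈ S), if t ∈ S then 1 else W)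
            = W ^ (n - S.card) := by
          rw [Finset.prod_congr rfl (fun t ht => if_neg (Finset.mem_filter.1 ht).2),
            Finset.prod_const]
          congr 1
          rw [Finset.filter_not, Finset.filter_univ_mem, Finset.card_sdiff_of_subset (Finset.subset_univ S),
            Finset.card_univ, Fintype.card_fin]
        rw [e2, e3, one_mul]
      calc (Finset.univ.filter (fun b => pat a b = S)).card
          ≤ (Fintype.piFinset (fun t : Fin n =>
              if t ∈ S then ({z0} : Finset (Fin W)) else Finset.univ)).card :=
            Finset.card_le_card_of_injOn hi hmap hinj
        _ = W ^ (n - S.card) := hcardtarget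
    calc m 1 = (Finset.univ : Finset (Fin (m 1))).card := by
          rw [Finset.card_univ, Fintype.card_fin]
      _ = ∑ S ∈ PP a, (Finset.univ.filter (fun b => pat a b = S)).card := hcount
      _ ≤ ∑ S ∈ PP a, W ^ (n - S.card) := Finset.sum_le_sum hfib
  -- disjointness of rows
  have hdisj : ∀ a ∈ (Finset.univ : Finset (Fin (m 0))), ∀ a' ∈ Finset.univ, a ≠ a' →
      Disjoint (U a) (U a') := by
    intro a _ a' _ hne
    rw [Finset.disjoint_left]
    intro w hw hw'
    obtain ⟨S, hS, hwS⟩ := Finset.mem_biUnion.1 hw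
    obtain ⟨S', hS', hwS'⟩ := Finset.mem_biUnion.1 hw'
    have hwS2 := (Finset.mem_filter.1 hwS).2
    have hwS2' := (Finset.mem_filter.1 hwS').2
    obtain ⟨t, h1, h2, h3⟩ := hrow a a' (rep a S) (rep a' S') hne
    have htS : t ∈ S := by rw [← hrep a S hS]; exact (hmempat _ _ t).2 h1
    have htS' : t ∈ S' := by rw [← hrep a' S' hS']; exact (hmempat _ _ t).2 h2
    have e1 := hwS2 t htS
    have e2 := hwS2' t htS'
    simp only [hvvdef, dif_pos h1] at e1
    simp only [hvvdef, dif_pos h2] at e2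
    apply h3
    apply Fin.val_injective
    have : ((⟨(x a (rep a S) t).val, h1⟩ : Fin d) : ℕ)
        = ((⟨(x a' (rep a' S') t).val, h2⟩ : Fin d) : ℕ) := by rw [← e1, ← e2]
    exact_mod_cast this
  -- assemble
  have hsum : ∑ a : Fin (m 0), ((U a).card : ℝ) ≤ (d : ℝ) ^ n := by
    have h1 : ∑ a : Fin (m 0), (U a).card = (Finset.univ.biUnion U).card :=
      (Finset.card_biUnion hdisj).symm
    have h2 : (Finset.univ.biUnion U).card ≤ Fintype.card (Fin n → Fin d) :=
      le_trans (Finset.card_le_card (Finset.subset_univ _))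
        (le_of_eq (Finset.card_univ))
    have h3 : Fintype.card (Fin n → Fin d) = d ^ n := by
      rw [Fintype.card_fun, Fintype.card_fin, Fintype.card_fin]
    calc ∑ a : Fin (m 0), ((U a).card : ℝ) = ((∑ a : Fin (m 0), (U a).card : ℕ) : ℝ) := by
          push_cast; ring
      _ ≤ ((d ^ n : ℕ) : ℝ) := by
          have : ∑ a : Fin (m 0), (U a).card ≤ d ^ n := by rw [h1]; omega
          exact_mod_cast this
      _ = (d : ℝ) ^ n := by push_cast; ring
  have hperrow : ∀ a : Fin (m 0), (m 1 : ℝ) ^ γ ≤ ((U a).card : ℝ) := by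
    intro a
    calc (m 1 : ℝ) ^ γ ≤ ((∑ S ∈ PP a, W ^ (n - S.card) : ℕ) : ℝ) ^ γ := by
          apply Real.rpow_le_rpow (Nat.cast_nonneg _) _ hγ0.le
          exact_mod_cast hM a
      _ ≤ ((U a).card : ℝ) := bc_row d W γ hγ0 hγ1 hWD n (PP a) (vv a)
  calc (m 0 : ℝ) * (m 1 : ℝ) ^ γ = ∑ _a : Fin (m 0), (m 1 : ℝ) ^ γ := by
        rw [Finset.sum_const, Finset.card_univ, Fintype.card_fin, nsmul_eq_mul]
    _ ≤ ∑ a : Fin (m 0), ((U a).card : ℝ) := Finset.sum_le_sum (fun a _ => hperrow a)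
    _ ≤ (d : ℝ) ^ n := hsum

lemma bc_feasible {k : ℕ} (d : ℕ) (hd : 2 ≤ d) (hdk : 2 * d ≤ k + 1)
    (G : Fin 2 → SimpleGraph (Fin k))
    (hG1 : ∀ a b : Fin k, (G 0).Adj a b ↔ a ≠ b ∧ (d ≤ a.val ∨ d ≤ b.val))
    (hG2 : ∀ a b : Fin k, (G 1).Adj a b ↔ a ≠ b ∧ a.val < d ∧ b.val < d)
    (α : ℝ) (hα : α ∈ Set.Icc (0 : ℝ) 1) :
    FeasibleRate G ![α * Real.logb 2 d, (1 - α) * Real.logb 2 ((k - d + 1 : ℕ) : ℝ)] := by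
  classical
  obtain ⟨hα0, hα1⟩ := hα
  have hkd : d + 1 ≤ k := by omega
  set K : ℕ := k - d + 1 with hKdef
  have hK2 : 2 ≤ K := by omega
  set s : ℕ → ℕ := fun n => ⌊α * n⌋₊ with hsdef
  have hsle : ∀ n, s n ≤ n := by
    intro n
    have h1 : α * n ≤ (n : ℝ) := by nlinarith [Nat.cast_nonneg (α := ℝ) n]
    have := Nat.floor_le_floor h1
    simpa [hsdef] using this
  set m : ℕ → Fin 2 → ℕ := fun n => ![d ^ s n, K ^ (n - s n)] with hmdef
  have hm0 : ∀ n, m n 0 = d ^ s n := fun n => rfl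
  have hm1 : ∀ n, m n 1 = K ^ (n - s n) := fun n => rfl
  -- encoding letters
  have hdpos : 0 < d := by omega
  have hkpos : 0 < k := by omega
  set lowL : Fin d → Fin k := fun c => ⟨c.val, lt_of_lt_of_le c.isLt (by omega)⟩ with hlowdef
  set u2 : Fin K → Fin k := fun j =>
    if j.val = 0 then ⟨0, hkpos⟩ else ⟨d + j.val - 1, by
      have := j.isLt; omega⟩ with hu2def
  have hu2inj : Function.Injective u2 := by
    intro j j' h
    simp only [hu2def] at h
    by_cases h1 : j.val = 0 <;> by_cases h2 : j'.val = 0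
    · exact Fin.val_injective (by omega)
    · rw [if_pos h1, if_neg h2] at h
      have := congrArg Fin.val h
      simp only at this
      have := j'.isLt; omega
    · rw [if_neg h1, if_pos h2] at h
      have := congrArg Fin.val h
      simp only at this
      have := j.isLt; omega
    · rw [if_neg h1, if_neg h2] at h
      have := congrArg Fin.val h
      simp only at this
      exact Fin.val_injective (by omega)
  have hu2low : ∀ j : Fin K, (u2 j).val < d → j.val = 0 := by
    intro j h
    by_contra hj
    simp only [hu2def, if_neg hj] at h
    omega
  refine ⟨?_, m, ?_, ?_, ?_⟩
  · rw [Fin.forall_fin_two]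
    constructor
    · simp only [Matrix.cons_val_zero]
      apply mul_nonneg hα0
      apply Real.logb_nonneg one_lt_two
      have : (1:ℕ) ≤ d := by omega
      exact_mod_cast this
    · simp only [Matrix.cons_val_one, Matrix.head_cons]
      apply mul_nonneg (by linarith)
      apply Real.logb_nonneg one_lt_two
      have : (1:ℕ) ≤ k - d + 1 := by omega
      exact_mod_cast this
  · intro n
    rw [Fin.forall_fin_two]
    exact ⟨pow_pos hdpos _, pow_pos (by omega) _⟩
  · -- feasibility at each length
    intro n
    set E : (∀ i : Fin 2, Fin (m n i)) → (Fin n → Fin k) := fun msg t =>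
      if h : (t : ℕ) < s n then
        lowL ((finFunctionFinEquiv.symm (msg 0 : Fin (d ^ s n))) ⟨t, h⟩)
      else
        u2 ((finFunctionFinEquiv.symm (msg 1 : Fin (K ^ (n - s n)))) ⟨(t : ℕ) - s n, by
          have := t.isLt; omega⟩) with hEdef
    refine ⟨E, ?_⟩
    rw [Fin.forall_fin_two]
    constructor
    · -- user 1
      intro a b hne
      have hdig : finFunctionFinEquiv.symm (a 0 : Fin (d ^ s n)) ≠
          finFunctionFinEquiv.symm (b 0 : Fin (d ^ s n)) := by
        intro h
        exact hne (finFunctionFinEquiv.symm.injective h)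
      obtain ⟨i0, hi0⟩ := Function.ne_iff.1 hdig
      refine ⟨⟨i0.val, lt_of_lt_of_le i0.isLt (hsle n)⟩, ?_⟩
      have hc : ((⟨i0.val, lt_of_lt_of_le i0.isLt (hsle n)⟩ : Fin n) : ℕ) < s n := i0.isLt
      have hidx : (⟨((⟨i0.val, lt_of_lt_of_le i0.isLt (hsle n)⟩ : Fin n) : ℕ), hc⟩ :
          Fin (s n)) = i0 := by
        apply Fin.val_injective; rfl
      have hEa : E a ⟨i0.val, lt_of_lt_of_le i0.isLt (hsle n)⟩ =
          lowL ((finFunctionFinEquiv.symm (a 0 : Fin (d ^ s n))) i0) := by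
        simp only [hEdef, dif_pos hc, hidx]
      have hEb : E b ⟨i0.val, lt_of_lt_of_le i0.isLt (hsle n)⟩ =
          lowL ((finFunctionFinEquiv.symm (b 0 : Fin (d ^ s n))) i0) := by
        simp only [hEdef, dif_pos hc, hidx]
      rw [hEa, hEb]
      constructor
      · intro h
        apply hi0
        apply Fin.val_injective
        have := congrArg Fin.val h
        simpa [hlowdef] using this
      · rw [hG1]
        rintro ⟨_, h | h⟩
        · simp only [hlowdef] at h
          exact absurd h (by have := ((finFunctionFinEquiv.symm (a 0 : Fin (d ^ s n))) i0).isLt; omega)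
        · simp only [hlowdef] at h
          exact absurd h (by have := ((finFunctionFinEquiv.symm (b 0 : Fin (d ^ s n))) i0).isLt; omega)
    · -- user 2
      intro a b hne
      have hdig : finFunctionFinEquiv.symm (a 1 : Fin (K ^ (n - s n))) ≠
          finFunctionFinEquiv.symm (b 1 : Fin (K ^ (n - s n))) := by
        intro h
        exact hne (finFunctionFinEquiv.symm.injective h)
      obtain ⟨j0, hj0⟩ := Function.ne_iff.1 hdig
      have htlt : s n + j0.val < n := by have := j0.isLt; omega
      refine ⟨⟨s n + j0.val, htlt⟩, ?_⟩
      have hc : ¬ ((⟨s n + j0.val, htlt⟩ : Fin n) : ℕ) < s n := by simp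
      have hidx : (⟨((⟨s n + j0.val, htlt⟩ : Fin n) : ℕ) - s n, by
          have := (⟨s n + j0.val, htlt⟩ : Fin n).isLt; omega⟩ : Fin (n - s n)) = j0 := by
        apply Fin.val_injective
        show s n + j0.val - s n = j0.val
        omega
      have hEa : E a ⟨s n + j0.val, htlt⟩ =
          u2 ((finFunctionFinEquiv.symm (a 1 : Fin (K ^ (n - s n)))) j0) := by
        simp only [hEdef, dif_neg hc, hidx]
      have hEb : E b ⟨s n + j0.val, htlt⟩ =
          u2 ((finFunctionFinEquiv.symm (b 1 : Fin (K ^ (n - s n)))) j0) := by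
        simp only [hEdef, dif_neg hc, hidx]
      rw [hEa, hEb]
      refine ⟨fun h => hj0 (hu2inj h), ?_⟩
      rw [hG2]
      rintro ⟨hne2, h1, h2⟩
      apply hj0
      apply Fin.val_injective
      rw [hu2low _ h1, hu2low _ h2]
  · -- rate limits
    have hfloor : Tendsto (fun n : ℕ => (s n : ℝ) / n) atTop (nhds α) := by
      apply tendsto_of_tendsto_of_tendsto_of_le_of_le' (g := fun n : ℕ => α - 1 / n)
        (h := fun n : ℕ => α)
      · simpa using Filter.Tendsto.const_sub α tendsto_one_div_atTop_nhds_zero_nat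
      · exact tendsto_const_nhds
      · filter_upwards [Filter.eventually_ge_atTop 1] with n hn
        have hnpos : (0:ℝ) < n := by exact_mod_cast hn
        have hfl : α * n - 1 ≤ (s n : ℝ) := by
          have := Nat.sub_one_lt_floor (α * n)
          simp only [hsdef]
          linarith
        have e1 : α - 1 / n = (α * n - 1) / n := by field_simp
        rw [e1]
        exact div_le_div_of_nonneg_right hfl hnpos.le
      · filter_upwards [Filter.eventually_ge_atTop 1] with n hn
        have hnpos : (0:ℝ) < n := by exact_mod_cast hn
        rw [div_le_iff₀ hnpos]
        have : (s n : ℝ) ≤ α * n := by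
          simp only [hsdef]
          exact Nat.floor_le (by positivity)
        linarith
    rw [Fin.forall_fin_two]
    constructor
    · simp only [Matrix.cons_val_zero]
      have heq : ∀ n : ℕ, Real.logb 2 ((m n 0 : ℕ) : ℝ) / n = ((s n : ℝ)/n) * Real.logb 2 d := by
        intro n
        rw [hm0]
        push_cast
        rw [Real.logb_pow]
        ring
      exact Tendsto.congr (fun n => (heq n).symm) (hfloor.mul_const _)
    · simp only [Matrix.cons_val_one, Matrix.head_cons]
      have hsub : Tendsto (fun n : ℕ => ((n - s n : ℕ) : ℝ)/n) atTop (nhds (1 - α)) := by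
        apply Tendsto.congr' _ (tendsto_const_nhds.sub hfloor)
        filter_upwards [Filter.eventually_ge_atTop 1] with n hn
        have hnne : (n:ℝ) ≠ 0 := by positivity
        rw [Nat.cast_sub (hsle n), sub_div, div_self hnne]
      have heq : ∀ n : ℕ, Real.logb 2 ((m n 1 : ℕ) : ℝ) / n =
          (((n - s n : ℕ) : ℝ)/n) * Real.logb 2 ((k - d + 1 : ℕ) : ℝ) := by
        intro n
        rw [hm1]
        push_cast
        rw [Real.logb_pow]
        have : ((K : ℕ) : ℝ) = ((k - d + 1 : ℕ) : ℝ) := by rw [hKdef]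
        rw [this]; push_cast; ring
      exact Tendsto.congr (fun n => (heq n).symm) (hsub.mul_const _)

lemma bc_rate_converse {k : ℕ} (d : ℕ) (hd : 2 ≤ d) (hdk : 2 * d ≤ k + 1)
    (G : Fin 2 → SimpleGraph (Fin k))
    (hG1 : ∀ a b : Fin k, (G 0).Adj a b ↔ a ≠ b ∧ (d ≤ a.val ∨ d ≤ b.val))
    (hG2 : ∀ a b : Fin k, (G 1).Adj a b ↔ a ≠ b ∧ a.val < d ∧ b.val < d)
    (R : Fin 2 → ℝ) (hR : FeasibleRate G R) :
    R 0 + (Real.logb ((k - d + 1 : ℕ) : ℝ) d) * R 1 ≤ Real.logb 2 d := by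
  obtain ⟨hRnn, m, hpos, hfeasn, htend⟩ := hR
  set γ : ℝ := Real.logb ((k - d + 1 : ℕ) : ℝ) d with hγdef
  have hfin : ∀ n, (m n 0 : ℝ) * (m n 1 : ℝ) ^ γ ≤ (d : ℝ) ^ n :=
    fun n => bc_finite d n hd hdk G hG1 hG2 (m n) (hpos n 1) (hfeasn n)
  have hlog : ∀ n : ℕ, 1 ≤ n →
      Real.logb 2 (m n 0) / n + γ * (Real.logb 2 (m n 1) / n) ≤ Real.logb 2 d := by
    intro n hn
    have hm0pos : (0:ℝ) < m n 0 := by exact_mod_cast hpos n 0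
    have hm1pos : (0:ℝ) < m n 1 := by exact_mod_cast hpos n 1
    have hrp : (0:ℝ) < (m n 1 : ℝ) ^ γ := Real.rpow_pos_of_pos hm1pos γ
    have h1 : Real.logb 2 ((m n 0 : ℝ) * (m n 1 : ℝ) ^ γ) ≤ Real.logb 2 ((d:ℝ)^n) :=
      Real.logb_le_logb_of_le one_lt_two (by positivity) (hfin n)
    rw [Real.logb_mul (ne_of_gt hm0pos) (ne_of_gt hrp)] at h1
    have h2 : Real.logb 2 ((m n 1 : ℝ) ^ γ) = γ * Real.logb 2 (m n 1) := by
      rw [Real.logb, Real.logb, Real.log_rpow hm1pos]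
      ring
    rw [h2, Real.logb_pow] at h1
    have hnpos : (0:ℝ) < n := by exact_mod_cast hn
    have e1 : Real.logb 2 (m n 0) / n + γ * (Real.logb 2 (m n 1) / n)
        = (Real.logb 2 (m n 0) + γ * Real.logb 2 (m n 1)) / n := by ring
    rw [e1, div_le_iff₀ hnpos]
    nlinarith [h1]
  have hlim : Tendsto (fun n : ℕ => Real.logb 2 (m n 0) / n + γ * (Real.logb 2 (m n 1) / n))
      atTop (nhds (R 0 + γ * R 1)) := (htend 0).add ((htend 1).const_mul γ)
  exact le_of_tendsto hlim (Filter.eventually_atTop.2 ⟨1, hlog⟩)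

end BCAux

/-- Theorem 8: user 1 has the complete graph on `Σ_k` minus a clique on `Σ_d` and user 2 has the
complement graph (two distinct letters adjacent iff both lie in the first `d` letters), where
`2 ≤ d ≤ (k+1)/2`. Then for every `α ∈ [0,1]` the rate vector
`(α log₂ d, (1−α) log₂ (k−d+1))` is optimal; in particular it is feasible, and every feasible
`(R₁, R₂)` with `R₁ ≥ α log₂ d` satisfies `R₂ ≤ (1−α) log₂ (k−d+1)`. -/
theorem optimal_cliqueMinusClique_complement (k d : ℕ) (hd : 2 ≤ d) (hdk : 2 * d ≤ k + 1)
    (G : Fin 2 → SimpleGraph (Fin k))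
    (hG1 : ∀ a b : Fin k, (G 0).Adj a b ↔ a ≠ b ∧ (d ≤ a.val ∨ d ≤ b.val))
    (hG2 : ∀ a b : Fin k, (G 1).Adj a b ↔ a ≠ b ∧ a.val < d ∧ b.val < d)
    (α : ℝ) (hα : α ∈ Set.Icc (0 : ℝ) 1) :
    OptimalRate G ![α * Real.logb 2 d, (1 - α) * Real.logb 2 ((k - d + 1 : ℕ) : ℝ)] ∧
    FeasibleRate G ![α * Real.logb 2 d, (1 - α) * Real.logb 2 ((k - d + 1 : ℕ) : ℝ)] ∧
    (∀ R : Fin 2 → ℝ, FeasibleRate G R → α * Real.logb 2 d ≤ R 0 →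
      R 1 ≤ (1 - α) * Real.logb 2 ((k - d + 1 : ℕ) : ℝ)) := by
  obtain ⟨hα0, hα1⟩ := hα
  have hkd : d + 1 ≤ k := by omega
  set γ : ℝ := Real.logb ((k - d + 1 : ℕ) : ℝ) d with hγdef
  set L : ℝ := Real.logb 2 ((k - d + 1 : ℕ) : ℝ) with hLdef
  have hK2 : (2:ℝ) ≤ ((k - d + 1 : ℕ) : ℝ) := by
    have : (2:ℕ) ≤ k - d + 1 := by omega
    exact_mod_cast this
  have hd1 : (1:ℝ) < (d:ℝ) := by exact_mod_cast hd
  have hγ0 : 0 < γ := by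
    rw [hγdef]
    exact Real.logb_pos (by linarith) hd1
  have hlogK : Real.log ((k - d + 1 : ℕ) : ℝ) ≠ 0 :=
    ne_of_gt (Real.log_pos (by linarith))
  have hlog2 : Real.log (2:ℝ) ≠ 0 := ne_of_gt (Real.log_pos one_lt_two)
  have hγL : γ * L = Real.logb 2 d := by
    have hlogK' : Real.log (((k - d : ℕ) : ℝ) + 1) ≠ 0 := by
      rw [show ((k - d : ℕ) : ℝ) + 1 = ((k - d + 1 : ℕ) : ℝ) by push_cast; ring]
      exact hlogK
    rw [hγdef, hLdef, Real.logb, Real.logb, Real.logb]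
    field_simp
  have hfeas := bc_feasible d hd hdk G hG1 hG2 α ⟨hα0, hα1⟩
  have hconv := fun R hR => bc_rate_converse d hd hdk G hG1 hG2 R hR
  have hthird : ∀ R : Fin 2 → ℝ, FeasibleRate G R → α * Real.logb 2 d ≤ R 0 →
      R 1 ≤ (1 - α) * L := by
    intro R hR hR0
    have h := hconv R hR
    have h2 : γ * R 1 ≤ γ * ((1 - α) * L) := by
      have e1 : γ * ((1 - α) * L) = (1 - α) * Real.logb 2 d := by
        rw [← hγL]; ring
      rw [e1]
      nlinarith [h, hR0]
    exact le_of_mul_le_mul_left h2 hγ0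
  refine ⟨⟨hfeas, ?_, ?_⟩, hfeas, hthird⟩
  · rintro ⟨R1', hlt, hfeas'⟩
    have h := hconv _ hfeas'
    simp only [Matrix.cons_val_zero, Matrix.cons_val_one, Matrix.head_cons] at h hlt
    have e1 : γ * ((1 - α) * L) = (1 - α) * Real.logb 2 d := by rw [← hγL]; ring
    nlinarith [h, hlt]
  · rintro ⟨R2', hlt, hfeas'⟩
    have h := hconv _ hfeas'
    simp only [Matrix.cons_val_zero, Matrix.cons_val_one, Matrix.head_cons] at h hlt
    have h2 : γ * R2' ≤ γ * ((1 - α) * L) := by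
      have e1 : γ * ((1 - α) * L) = (1 - α) * Real.logb 2 d := by rw [← hγL]; ring
      rw [e1]
      nlinarith [h]
    have := le_of_mul_le_mul_left h2 hγ0
    nlinarith [this, hlt]
end

section
/- Let 2 ≤ d ≤ k, let G_1 be the complete graph on Σ_k minus a clique on Σ_d, and let G_2, …, G_r be arbitrary confusion graphs on Σ_k. Then for every α ∈ [0,1], every feasible rate vector of the form (α·log₂ d, R_2, …, R_r) satisfies Σ_{i=2}^{r} R_i ≤ (1−α)·log₂ k. -/
open Finset


-- increment monotonicity
lemma rpow_inc_mono (c S : ℝ) (hc : 1 ≤ c) (hS : 0 ≤ S) :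
    MonotoneOn (fun x : ℝ => (x + S) ^ c - x ^ c) (Set.Ici 0) := by
  have hder : ∀ x : ℝ, HasDerivAt (fun x : ℝ => (x + S) ^ c - x ^ c)
      (c * (x + S) ^ (c - 1) * 1 - c * x ^ (c - 1)) x := by
    intro x
    have h1 : HasDerivAt (fun y : ℝ => y ^ c) (c * (x + S) ^ (c - 1)) (x + S) :=
      Real.hasDerivAt_rpow_const (Or.inr hc)
    have h2 : HasDerivAt (fun y : ℝ => y + S) 1 x := (hasDerivAt_id x).add_const S
    have h3 : HasDerivAt (fun y : ℝ => y ^ c) (c * x ^ (c - 1)) x :=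
      Real.hasDerivAt_rpow_const (Or.inr hc)
    exact (h1.comp x h2).sub h3
  apply monotoneOn_of_deriv_nonneg (convex_Ici 0)
  · exact fun x _ => (hder x).continuousAt.continuousWithinAt
  · intro x _
    exact (hder x).differentiableAt.differentiableWithinAt
  · intro x hx
    rw [interior_Ici] at hx
    rw [(hder x).deriv]
    have h4 : x ^ (c - 1) ≤ (x + S) ^ (c - 1) :=
      Real.rpow_le_rpow (le_of_lt hx) (by linarith) (by linarith)
    nlinarith [h4, (by linarith : (0:ℝ) ≤ c)]

lemma sum_rpow_key {ι : Type*} [DecidableEq ι] (c : ℝ) (hc : 1 ≤ c) (a : ℝ) (ha : 0 ≤ a)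
    (T : Finset ι) (M : ι → ℝ) (hM : ∀ j ∈ T, a ≤ M j) :
    (∑ j ∈ T, (M j) ^ c) + ((T.card : ℝ) * a) ^ c ≤ (∑ j ∈ T, M j) ^ c + (T.card : ℝ) * a ^ c := by
  induction T using Finset.induction_on with
  | empty => simp
  | @insert j₀ T hj₀ ih =>
    have hM' : ∀ j ∈ T, a ≤ M j := fun j hj => hM j (mem_insert_of_mem hj)
    have hM₀ : a ≤ M j₀ := hM j₀ (mem_insert_self _ _)
    have ihh := ih hM'
    set S := ∑ j ∈ T, M j with hSdef
    set t : ℝ := (T.card : ℝ) with htdef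
    have hta : 0 ≤ t * a := by positivity
    have htaS : t * a ≤ S := by
      have : ∑ j ∈ T, a ≤ S := Finset.sum_le_sum hM'
      simpa [mul_comm] using this
    have hS0 : 0 ≤ S := le_trans hta htaS
    -- inc1 : (a+S)^c - a^c ≤ (M₀+S)^c - M₀^c
    have inc1 := rpow_inc_mono c S hc hS0 (Set.mem_Ici.2 ha)
      (Set.mem_Ici.2 (le_trans ha hM₀)) hM₀
    simp only at inc1
    -- inc2 : (t*a+a)^c - (t*a)^c ≤ (S+a)^c - S^c
    have inc2 := rpow_inc_mono c a hc ha (Set.mem_Ici.2 hta) (Set.mem_Ici.2 hS0) htaS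
    simp only at inc2
    rw [Finset.sum_insert hj₀, Finset.sum_insert hj₀, Finset.card_insert_of_notMem hj₀]
    push_cast
    have e1 : (a + S) = (S + a) := by ring
    have e2 : ((t + 1) * a) = (t * a + a) := by ring
    rw [e2]
    rw [e1] at inc1
    linarith

/-- the "visible subcube" set of a code -/
def VV (d : ℕ) {k n : ℕ} (C : Finset (Fin n → Fin k)) : Finset (Fin n → Fin k) :=
  univ.filter (fun y => (∀ t, (y t : ℕ) < d) ∧ ∃ x ∈ C, ∀ t, (x t : ℕ) < d → y t = x t)

lemma mem_VV {d k n : ℕ} {C : Finset (Fin n → Fin k)} {y : Fin n → Fin k} :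
    y ∈ VV d C ↔ (∀ t, (y t : ℕ) < d) ∧ ∃ x ∈ C, ∀ t, (x t : ℕ) < d → y t = x t := by
  simp [VV]

lemma VV_mono {d k n : ℕ} {C C' : Finset (Fin n → Fin k)} (h : C ⊆ C') :
    VV d C ⊆ VV d C' := by
  intro y hy
  rw [mem_VV] at hy ⊢
  obtain ⟨h1, x, hx, h2⟩ := hy
  exact ⟨h1, x, h hx, h2⟩

lemma card_le_VV_rpow (k d : ℕ) (hd : 2 ≤ d) (hdk : d ≤ k) :
    ∀ (n : ℕ) (C : Finset (Fin n → Fin k)),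
      (C.card : ℝ) ≤ ((VV d C).card : ℝ) ^ (Real.logb d k) := by
  have hd1 : (1 : ℝ) < (d : ℝ) := by exact_mod_cast hd.trans_lt' one_lt_two
  have hk0 : (0 : ℝ) < (k : ℝ) := by
    have : (0:ℕ) < k := lt_of_lt_of_le (by norm_num) (le_trans hd hdk)
    exact_mod_cast this
  have hc : 1 ≤ Real.logb d k := by
    rw [Real.le_logb_iff_rpow_le hd1 hk0]
    simpa using (by exact_mod_cast hdk : (d:ℝ) ≤ (k:ℝ))
  set c := Real.logb d k with hcdef
  have hc0 : 0 ≤ c := le_trans zero_le_one hc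
  intro n
  induction n with
  | zero =>
    intro C
    rcases C.eq_empty_or_nonempty with h | h
    · simp [h]
      positivity
    · have h1 : C.card ≤ 1 := Finset.card_le_one.2 (fun x _ y _ => Subsingleton.elim x y)
      have h2 : 1 ≤ (VV d C).card := by
        obtain ⟨x, hx⟩ := h
        refine Finset.card_pos.2 ⟨x, ?_⟩
        rw [mem_VV]
        exact ⟨fun t => t.elim0, x, hx, fun t => t.elim0⟩
      calc (C.card : ℝ) ≤ 1 := by exact_mod_cast h1
        _ ≤ ((VV d C).card : ℝ) ^ c :=
            Real.one_le_rpow (by exact_mod_cast h2) hc0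
  | succ n ih =>
    intro C
    classical
    set Cv : Fin k → Finset (Fin n → Fin k) :=
      fun v => (C.filter (fun x => x 0 = v)).image (Fin.tail : (Fin (n+1) → Fin k) → (Fin n → Fin k)) with hCvdef
    set D : Finset (Fin n → Fin k) :=
      (C.filter (fun x => d ≤ ((x 0 : ℕ)))).image (Fin.tail : (Fin (n+1) → Fin k) → (Fin n → Fin k)) with hDdef
    set Td : Finset (Fin k) := univ.filter (fun j : Fin k => (j : ℕ) < d) with hTddef
    -- tail is injective on head-fibers
    have tail_injOn : ∀ v : Fin k, Set.InjOn (Fin.tail : (Fin (n+1) → Fin k) → (Fin n → Fin k))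
        ↑(C.filter (fun x => x 0 = v)) := by
      intro v x hx y hy hxy
      simp only [coe_filter, Set.mem_setOf_eq] at hx hy
      have : x = Fin.cons (x 0) (Fin.tail x) := (Fin.cons_self_tail x).symm
      rw [this, hx.2, hxy, ← hy.2, Fin.cons_self_tail]
    -- (1) card C = ∑ card (Cv v)
    have hcardC : C.card = ∑ v : Fin k, (Cv v).card := by
      rw [Finset.card_eq_sum_card_fiberwise
        (f := fun x => x 0) (t := univ) (fun x _ => mem_univ _)]
      refine Finset.sum_congr rfl (fun v _ => ?_)
      rw [hCvdef]
      exact (Finset.card_image_of_injOn (tail_injOn v)).symm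
    -- membership in Cv
    have mem_Cv : ∀ (v : Fin k) (z : Fin n → Fin k),
        z ∈ Cv v ↔ ∃ x ∈ C, x 0 = v ∧ Fin.tail x = z := by
      intro v z
      simp only [hCvdef, mem_image, mem_filter]
      constructor
      · rintro ⟨x, ⟨hx, hx0⟩, ht⟩; exact ⟨x, hx, hx0, ht⟩
      · rintro ⟨x, hx, hx0, ht⟩; exact ⟨x, ⟨hx, hx0⟩, ht⟩
    have mem_D : ∀ (z : Fin n → Fin k),
        z ∈ D ↔ ∃ x ∈ C, d ≤ (x 0 : ℕ) ∧ Fin.tail x = z := by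
      intro z
      simp only [hDdef, mem_image, mem_filter]
      constructor
      · rintro ⟨x, ⟨hx, hx0⟩, ht⟩; exact ⟨x, hx, hx0, ht⟩
      · rintro ⟨x, hx, hx0, ht⟩; exact ⟨x, ⟨hx, hx0⟩, ht⟩
    -- (2) split of VV d C
    have hsplit : VV d C = Td.biUnion
        (fun j => (VV d (Cv j) ∪ VV d D).image (Fin.cons j)) := by
      ext y
      rw [mem_VV, Finset.mem_biUnion]
      constructor
      · rintro ⟨hlow, x, hxC, hcomp⟩
        refine ⟨y 0, by simp [hTddef, hlow 0], ?_⟩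
        rw [Finset.mem_image]
        refine ⟨Fin.tail y, ?_, Fin.cons_self_tail y⟩
        rw [Finset.mem_union]
        by_cases hx0 : (x 0 : ℕ) < d
        · left
          rw [mem_VV]
          refine ⟨fun t => hlow t.succ, Fin.tail x, ?_, fun t ht => hcomp t.succ ht⟩
          rw [mem_Cv]
          exact ⟨x, hxC, (hcomp 0 hx0).symm, rfl⟩
        · right
          rw [mem_VV]
          refine ⟨fun t => hlow t.succ, Fin.tail x, ?_, fun t ht => hcomp t.succ ht⟩
          rw [mem_D]
          exact ⟨x, hxC, le_of_not_gt hx0, rfl⟩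
      · rintro ⟨j, hj, hy⟩
        rw [Finset.mem_image] at hy
        obtain ⟨z, hz, hyz⟩ := hy
        rw [Finset.mem_union] at hz
        have hjd : (j : ℕ) < d := by simpa [hTddef] using hj
        rcases hz with hz | hz
        · rw [mem_VV] at hz
          obtain ⟨hlowz, xt, hxt, hcompz⟩ := hz
          rw [mem_Cv] at hxt
          obtain ⟨x, hxC, hx0, hxtail⟩ := hxt
          refine ⟨?_, x, hxC, ?_⟩
          · intro t
            induction t using Fin.cases with
            | zero => rw [← hyz]; simpa using hjd
            | succ t => rw [← hyz]; simpa using hlowz t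
          · intro t ht
            induction t using Fin.cases with
            | zero => rw [← hyz, hx0]; simp
            | succ t =>
              rw [← hyz]
              simp only [Fin.cons_succ]
              rw [hcompz t (by rw [← hxtail]; exact ht)]
              rw [← hxtail]; rfl
        · rw [mem_VV] at hz
          obtain ⟨hlowz, xt, hxt, hcompz⟩ := hz
          rw [mem_D] at hxt
          obtain ⟨x, hxC, hx0, hxtail⟩ := hxt
          refine ⟨?_, x, hxC, ?_⟩
          · intro t
            induction t using Fin.cases with
            | zero => rw [← hyz]; simpa using hjd
            | succ t => rw [← hyz]; simpa using hlowz t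
          · intro t ht
            induction t using Fin.cases with
            | zero =>
              exfalso
              exact absurd ht (not_lt.2 hx0)
            | succ t =>
              rw [← hyz]
              simp only [Fin.cons_succ]
              rw [hcompz t (by rw [← hxtail]; exact ht)]
              rw [← hxtail]; rfl
    -- card of VV d C
    have hcardVV : (VV d C).card = ∑ j ∈ Td, (VV d (Cv j) ∪ VV d D).card := by
      rw [hsplit, Finset.card_biUnion]
      · refine Finset.sum_congr rfl (fun j _ => ?_)
        refine Finset.card_image_of_injective _ (fun z z' h => ?_)
        have := congrArg Fin.tail h
        simpa using this
      · intro j hj j' hj' hne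
        simp only [Finset.disjoint_left]
        intro y hy hy'
        rw [Finset.mem_image] at hy hy'
        obtain ⟨z, _, hz⟩ := hy
        obtain ⟨z', _, hz'⟩ := hy'
        apply hne
        rw [← hz] at hz'
        have := congrFun hz' 0
        simpa using this.symm
    -- card Td = d
    have hTdcard : Td.card = d := by
      have : Td = (univ : Finset (Fin d)).image (Fin.castLE hdk) := by
        ext j
        simp only [hTddef, mem_filter, mem_univ, true_and, mem_image]
        constructor
        · intro hj
          exact ⟨⟨j, hj⟩, by ext; simp⟩
        · rintro ⟨i, rfl⟩
          simpa using i.isLt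
      rw [this, Finset.card_image_of_injective _ (Fin.castLE_injective hdk)]
      simp
    -- real quantities
    set u : ℝ := ((VV d D).card : ℝ) with hudef
    set W : Fin k → ℝ := fun j => (((VV d (Cv j) ∪ VV d D)).card : ℝ) with hWdef
    have hu0 : (0:ℝ) ≤ u := hudef ▸ Nat.cast_nonneg _
    have huW : ∀ j ∈ Td, u ≤ W j := by
      intro j _
      simp only [hudef, hWdef]
      exact_mod_cast Finset.card_le_card Finset.subset_union_right
    have hCvj : ∀ j ∈ Td, ((Cv j).card : ℝ) ≤ (W j) ^ c := by
      intro j _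
      refine le_trans (ih (Cv j)) (Real.rpow_le_rpow (Nat.cast_nonneg _) ?_ hc0)
      simp only [hWdef]
      exact_mod_cast Finset.card_le_card Finset.subset_union_left
    have hCvv : ∀ v ∈ univ.filter (fun v : Fin k => ¬ (v:ℕ) < d),
        ((Cv v).card : ℝ) ≤ u ^ c := by
      intro v hv
      rw [mem_filter] at hv
      have hsub : Cv v ⊆ D := by
        intro z hz
        rw [mem_Cv] at hz
        obtain ⟨x, hxC, hx0, ht⟩ := hz
        rw [mem_D]
        exact ⟨x, hxC, by rw [hx0]; exact le_of_not_gt hv.2, ht⟩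
      refine le_trans (ih (Cv v)) (Real.rpow_le_rpow (Nat.cast_nonneg _) ?_ hc0)
      rw [hudef]
      exact_mod_cast Finset.card_le_card (VV_mono hsub)
    -- count of high letters
    have hnotcard : ((univ.filter (fun v : Fin k => ¬ (v:ℕ) < d)).card : ℝ)
        = (k:ℝ) - (d:ℝ) := by
      have h1 := Finset.card_filter_add_card_filter_not
        (s := (univ : Finset (Fin k))) (p := fun v : Fin k => (v:ℕ) < d)
      rw [← hTddef] at h1
      rw [Finset.card_univ, Fintype.card_fin, hTdcard] at h1
      have h2 : (univ.filter (fun v : Fin k => ¬ (v:ℕ) < d)).card = k - d := by omega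
      rw [h2]
      have : d ≤ k := hdk
      push_cast [Nat.cast_sub this]
      ring
    -- the key inequality
    have key := sum_rpow_key c hc u hu0 Td W huW
    rw [hTdcard] at key
    have hdc : ((d:ℝ)) ^ c = (k:ℝ) := by
      rw [hcdef]
      exact Real.rpow_logb (by linarith) (by linarith) hk0
    have hmul : ((d:ℝ) * u) ^ c = (k:ℝ) * u ^ c := by
      rw [Real.mul_rpow (by linarith) hu0, hdc]
    rw [hmul] at key
    -- assemble
    have hsplitsum : ∑ v : Fin k, ((Cv v).card : ℝ)
        = ∑ v ∈ Td, ((Cv v).card:ℝ)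
          + ∑ v ∈ univ.filter (fun v : Fin k => ¬ (v:ℕ) < d), ((Cv v).card:ℝ) := by
      rw [hTddef]
      exact (Finset.sum_filter_add_sum_filter_not univ _ _).symm
    have hsum1 : ∑ v ∈ Td, ((Cv v).card:ℝ) ≤ ∑ j ∈ Td, (W j) ^ c :=
      Finset.sum_le_sum hCvj
    have hsum2 : ∑ v ∈ univ.filter (fun v : Fin k => ¬ (v:ℕ) < d), ((Cv v).card:ℝ)
        ≤ ((k:ℝ) - (d:ℝ)) * u ^ c := by
      rw [← hnotcard]
      calc _ ≤ ∑ _v ∈ univ.filter (fun v : Fin k => ¬ (v:ℕ) < d), u ^ c :=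
            Finset.sum_le_sum hCvv
        _ = _ := by rw [Finset.sum_const, nsmul_eq_mul]
    have hCcast : (C.card : ℝ) = ∑ v : Fin k, ((Cv v).card : ℝ) := by
      rw [hcardC]; push_cast; rfl
    have hVVcast : ((VV d C).card : ℝ) = ∑ j ∈ Td, W j := by
      rw [hcardVV]; push_cast; rfl
    have hupow : (0:ℝ) ≤ u ^ c := Real.rpow_nonneg hu0 c
    rw [hCcast, hVVcast]
    linarith

lemma step_bound (k d r : ℕ) (hr : 0 < r) (hd : 2 ≤ d) (hdk : d ≤ k)
    (G : Fin r → SimpleGraph (Fin k))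
    (hG1 : ∀ a b : Fin k, (G ⟨0, hr⟩).Adj a b ↔ a ≠ b ∧ (d ≤ a.val ∨ d ≤ b.val))
    (n : ℕ) (m : Fin r → ℕ) (hm : ∀ i, 0 < m i)
    (hfeas : FeasibleAtLength G m n) :
    ((∏ i ∈ univ.erase (⟨0, hr⟩ : Fin r), m i : ℕ) : ℝ)
      ≤ (((d:ℝ))^n / (m ⟨0, hr⟩ : ℝ)) ^ (Real.logb d k) := by
  classical
  obtain ⟨E, hE⟩ := hfeas
  set i0 : Fin r := ⟨0, hr⟩ with hi0
  set c := Real.logb d k with hcdef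
  have hc0 : 0 ≤ c := by
    rw [hcdef]
    apply Real.logb_nonneg
    · exact_mod_cast hd.trans_lt' one_lt_two
    · exact_mod_cast (by omega : 1 ≤ k)
  set Cl : Fin (m i0) → Finset (Fin n → Fin k) :=
    fun a0 => (univ.filter (fun b : (∀ i : Fin r, Fin (m i)) => b i0 = a0)).image E with hCldef
  -- (a) each class has exactly F elements
  have hclass : ∀ a0 : Fin (m i0), (Cl a0).card = ∏ i ∈ univ.erase i0, m i := by
    intro a0
    have hinj : Set.InjOn E ↑(univ.filter (fun b : (∀ i : Fin r, Fin (m i)) => b i0 = a0)) := by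
      intro b hb b' hb' hEb
      by_contra hne
      obtain ⟨i, hi⟩ := Function.ne_iff.1 hne
      obtain ⟨t, ht, _⟩ := hE i b b' hi
      exact ht (congrFun hEb t)
    rw [hCldef]
    rw [Finset.card_image_of_injOn hinj]
    -- count the fiber
    have hbij : (univ.filter (fun b : (∀ i : Fin r, Fin (m i)) => b i0 = a0)).card
        = Fintype.card (∀ j : {j : Fin r // j ≠ i0}, Fin (m j)) := by
      rw [← Finset.card_univ]
      apply Finset.card_bij' (fun (b : (∀ i : Fin r, Fin (m i))) _ => fun j : {j : Fin r // j ≠ i0} => b j)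
        (fun g _ => fun i : Fin r =>
          if h : i = i0 then Fin.cast (congrArg m h).symm a0 else g ⟨i, h⟩)
      · intro b hb
        exact mem_univ _
      · intro g hg
        simp only [mem_filter, mem_univ, true_and]
        simp
      · intro b hb
        simp only [mem_filter, mem_univ, true_and] at hb
        funext i
        by_cases h : i = i0
        · subst h
          simp [hb]
        · simp [h]
      · intro g hg
        funext j
        simp [j.2]
    rw [hbij, Fintype.card_pi]
    rw [← Finset.prod_subtype (univ.erase i0) (p := fun j : Fin r => j ≠ i0)
      (fun j => by simp [Finset.mem_erase]) (fun j => Fintype.card (Fin (m j)))]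
    simp
  -- (b) disjointness of the VV's
  have hdisj : ∀ a0 ∈ (univ : Finset (Fin (m i0))), ∀ a0' ∈ univ, a0 ≠ a0' →
      Disjoint (VV d (Cl a0)) (VV d (Cl a0')) := by
    intro a0 _ a0' _ hne
    rw [Finset.disjoint_left]
    intro y hy hy'
    rw [mem_VV] at hy hy'
    obtain ⟨hlow, x, hx, hcomp⟩ := hy
    obtain ⟨_, x', hx', hcomp'⟩ := hy'
    rw [hCldef] at hx hx'
    simp only [Finset.mem_image, mem_filter, mem_univ, true_and] at hx hx'
    obtain ⟨b, hb0, hbE⟩ := hx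
    obtain ⟨b', hb'0, hb'E⟩ := hx'
    subst hbE
    subst hb'E
    have hbne : b i0 ≠ b' i0 := by rw [hb0, hb'0]; exact hne
    obtain ⟨t, htne, htadj⟩ := hE i0 b b' hbne
    rw [hG1] at htadj
    push_neg at htadj
    obtain ⟨h1, h2⟩ := htadj htne
    have e1 : y t = E b t := hcomp t (by omega)
    have e2 : y t = E b' t := hcomp' t (by omega)
    exact htne (by rw [← e1, ← e2])
  -- (c) total VV mass at most d^n
  have hlowcard : ((univ : Finset (Fin n → Fin k)).filter
      (fun y => ∀ t, ((y t : ℕ) < d))).card = d ^ n := by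
    have : ((univ : Finset (Fin n → Fin k)).filter (fun y => ∀ t, ((y t : ℕ) < d))).card
        = (univ : Finset (Fin n → Fin d)).card := by
      apply Finset.card_bij'
        (fun (y : Fin n → Fin k) (_ : y ∈ (univ : Finset (Fin n → Fin k)).filter
            (fun y => ∀ t, ((y t : ℕ) < d))) =>
          fun t => (⟨min (y t : ℕ) (d-1), by omega⟩ : Fin d))
        (fun z _ => fun t => Fin.castLE hdk (z t))
      case hi => intro y hy; exact mem_univ _
      case hj =>
        intro z hz
        simp only [mem_filter, mem_univ, true_and]
        intro t
        simpa using (z t).isLt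
      case left_inv =>
        intro y hy
        have hyl := (mem_filter.1 hy).2
        funext t
        have := hyl t
        apply Fin.ext
        simp
        omega
      case right_inv =>
        intro z hz
        funext t
        have := (z t).isLt
        apply Fin.ext
        simp
        omega
    rw [this]
    simp
  have hsumVV : ∑ a0 : Fin (m i0), (VV d (Cl a0)).card ≤ d ^ n := by
    rw [← Finset.card_biUnion hdisj]
    rw [← hlowcard]
    apply Finset.card_le_card
    intro y hy
    rw [Finset.mem_biUnion] at hy
    obtain ⟨a0, _, hy⟩ := hy
    rw [mem_VV] at hy
    simp only [mem_filter, mem_univ, true_and]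
    exact hy.1
  -- (d) pigeonhole
  have hne : (univ : Finset (Fin (m i0))).Nonempty := ⟨⟨0, hm i0⟩, mem_univ _⟩
  obtain ⟨a0m, _, hmin⟩ := Finset.exists_min_image univ (fun a0 => (VV d (Cl a0)).card) hne
  have hpig : (m i0) * (VV d (Cl a0m)).card ≤ d ^ n := by
    calc (m i0) * (VV d (Cl a0m)).card
        = ∑ _a0 : Fin (m i0), (VV d (Cl a0m)).card := by
          rw [Finset.sum_const, Finset.card_univ, Fintype.card_fin, smul_eq_mul]
      _ ≤ ∑ a0 : Fin (m i0), (VV d (Cl a0)).card :=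
          Finset.sum_le_sum (fun a0 ha0 => hmin a0 ha0)
      _ ≤ d ^ n := hsumVV
  have hm0pos : (0:ℝ) < (m i0 : ℝ) := by exact_mod_cast hm i0
  have hVVle : ((VV d (Cl a0m)).card : ℝ) ≤ ((d:ℝ))^n / (m i0 : ℝ) := by
    rw [le_div_iff₀ hm0pos]
    calc ((VV d (Cl a0m)).card : ℝ) * (m i0 : ℝ) = ((m i0) * (VV d (Cl a0m)).card : ℕ) := by
          push_cast; ring
      _ ≤ ((d ^ n : ℕ) : ℝ) := by exact_mod_cast hpig
      _ = ((d:ℝ))^n := by push_cast; ring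
  calc ((∏ i ∈ univ.erase i0, m i : ℕ) : ℝ)
      = ((Cl a0m).card : ℝ) := by rw [hclass a0m]
    _ ≤ ((VV d (Cl a0m)).card : ℝ) ^ c := card_le_VV_rpow k d hd hdk n (Cl a0m)
    _ ≤ (((d:ℝ))^n / (m i0 : ℝ)) ^ c :=
        Real.rpow_le_rpow (Nat.cast_nonneg _) hVVle hc0


/-- Corollary 13: if user 1 has the complete graph on `Σ_k` minus a clique on `Σ_d` and the other
users have arbitrary confusion graphs, then any feasible rate vector `(α log₂ d, R₂, …, R_r)`
with `α ∈ [0,1]` satisfies `∑_{i=2}^r R i ≤ (1−α) log₂ k`. -/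

theorem sum_rest_le_of_cliqueMinusClique (k d r : ℕ) (hr : 0 < r) (hd : 2 ≤ d) (hdk : d ≤ k)
    (G : Fin r → SimpleGraph (Fin k))
    (hG1 : ∀ a b : Fin k, (G ⟨0, hr⟩).Adj a b ↔ a ≠ b ∧ (d ≤ a.val ∨ d ≤ b.val))
    (α : ℝ) (hα : α ∈ Set.Icc (0 : ℝ) 1)
    (R : Fin r → ℝ) (hR : FeasibleRate G R) (hR0 : R ⟨0, hr⟩ = α * Real.logb 2 d) :
    ∑ i ∈ Finset.univ.erase (⟨0, hr⟩ : Fin r), R i ≤ (1 - α) * Real.logb 2 k := by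
  obtain ⟨hRnn, m, hmpos, hfeas, hlim⟩ := hR
  set i0 : Fin r := ⟨0, hr⟩ with hi0
  have hd1 : (1:ℝ) < (d:ℝ) := by exact_mod_cast hd.trans_lt' one_lt_two
  have hk1 : (1:ℝ) < (k:ℝ) := by
    have : 2 ≤ k := le_trans hd hdk
    exact_mod_cast this.trans_lt' one_lt_two
  have hlogd : 0 < Real.logb 2 (d:ℝ) := Real.logb_pos one_lt_two hd1
  have hlogk : 0 < Real.logb 2 (k:ℝ) := Real.logb_pos one_lt_two hk1
  have hlog2 : Real.log 2 ≠ 0 := ne_of_gt (Real.log_pos one_lt_two)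
  have hlogd' : Real.log (d:ℝ) ≠ 0 := ne_of_gt (Real.log_pos hd1)
  -- the sequences
  set F : ℕ → ℕ := fun n => ∏ i ∈ univ.erase i0, m n i with hF
  set f : ℕ → ℝ := fun n => Real.logb 2 (F n) / n with hf
  set g : ℕ → ℝ := fun n =>
    (Real.logb 2 k / Real.logb 2 d) * (Real.logb 2 d - Real.logb 2 (m n i0) / n) with hg
  -- change of base for the exponent
  have hcbase : Real.logb (d:ℝ) (k:ℝ) = Real.logb 2 k / Real.logb 2 d := by
    unfold Real.logb
    rw [div_div_div_cancel_right₀]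
    exact hlog2
  -- eventual inequality
  have hev : ∀ n : ℕ, 1 ≤ n → f n ≤ g n := by
    intro n hn
    have hnR : (0:ℝ) < (n:ℝ) := by exact_mod_cast hn
    have hFpos : (0:ℝ) < (F n : ℝ) := by
      have : 0 < F n := Finset.prod_pos (fun i _ => hmpos n i)
      exact_mod_cast this
    have hmpos0 : (0:ℝ) < ((m n i0 : ℕ) : ℝ) := by exact_mod_cast hmpos n i0
    have hXpos : (0:ℝ) < ((d:ℝ))^n / ((m n i0 : ℕ) : ℝ) := by positivity
    have h1 : (F n : ℝ) ≤ (((d:ℝ))^n / ((m n i0 : ℕ) : ℝ)) ^ (Real.logb d k) :=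
      step_bound k d r hr hd hdk G hG1 n (m n) (hmpos n) (hfeas n)
    have h2 : Real.logb 2 (F n) ≤
        Real.logb d k * Real.logb 2 (((d:ℝ))^n / ((m n i0 : ℕ) : ℝ)) := by
      calc Real.logb 2 (F n)
          ≤ Real.logb 2 ((((d:ℝ))^n / ((m n i0 : ℕ) : ℝ)) ^ (Real.logb d k)) :=
            Real.logb_le_logb_of_le one_lt_two hFpos h1
        _ = Real.logb d k * Real.logb 2 (((d:ℝ))^n / ((m n i0 : ℕ) : ℝ)) := by
            unfold Real.logb
            rw [Real.log_rpow hXpos]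
            ring
    have h3 : Real.logb 2 (((d:ℝ))^n / ((m n i0 : ℕ) : ℝ))
        = (n:ℝ) * Real.logb 2 d - Real.logb 2 (m n i0) := by
      rw [Real.logb_div (ne_of_gt (by positivity)) (ne_of_gt hmpos0)]
      rw [Real.logb_pow]
    rw [h3, hcbase] at h2
    rw [hf, hg]
    simp only
    rw [div_le_iff₀ hnR]
    calc Real.logb 2 (F n)
        ≤ Real.logb 2 k / Real.logb 2 d * ((n:ℝ) * Real.logb 2 d - Real.logb 2 (m n i0)) :=
          h2
      _ = Real.logb 2 k / Real.logb 2 d * (Real.logb 2 d - Real.logb 2 (m n i0) / n) * n := by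
          field_simp
  -- limits
  have hfe : ∀ n : ℕ, f n = ∑ i ∈ univ.erase i0, Real.logb 2 (m n i) / n := by
    intro n
    rw [hf]
    simp only
    rw [hF]
    simp only
    unfold Real.logb
    push_cast
    rw [Real.log_prod (fun i _ => by
      have : (0:ℝ) < (m n i : ℝ) := by exact_mod_cast hmpos n i
      exact ne_of_gt this)]
    rw [Finset.sum_div, Finset.sum_div]
  have hft : Filter.Tendsto f Filter.atTop (nhds (∑ i ∈ univ.erase i0, R i)) := by
    have h := tendsto_finset_sum (univ.erase i0) (fun i (_ : i ∈ univ.erase i0) => hlim i)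
    exact Filter.Tendsto.congr (fun n => (hfe n).symm) h
  have hgt : Filter.Tendsto g Filter.atTop
      (nhds ((Real.logb 2 k / Real.logb 2 d) * (Real.logb 2 d - R i0))) := by
    apply Filter.Tendsto.const_mul
    exact tendsto_const_nhds.sub (hlim i0)
  have hle := le_of_tendsto_of_tendsto hft hgt
    (Filter.eventually_atTop.2 ⟨1, hev⟩)
  rw [hR0] at hle
  have heq : (Real.logb 2 k / Real.logb 2 d) * (Real.logb 2 d - α * Real.logb 2 d)
      = (1 - α) * Real.logb 2 k := by
    field_simp
  rw [heq] at hle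
  exact hle
end

section
/- Let 2 ≤ d ≤ (k+1)/2, let G_1 be the complete graph on Σ_k minus a clique on Σ_d, and let G_2, …, G_r be confusion graphs on Σ_k each of which contains the complement of G_1 as a subgraph, i.e. every pair {a,b} of distinct letters of Σ_d is an edge of G_i for every 2 ≤ i ≤ r. Then for every α ∈ [0,1], every feasible rate vector of the form (α·log₂ d, R_2, …, R_r) satisfies Σ_{i=2}^{r} R_i ≤ (1−α)·log₂(k−d+1). -/
open Finset

section ZEAux

attribute [local instance] Classical.propDecidable

/-- Collapse map: letters `< d` are collapsed to `0`. -/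
def ZEtil (d : ℕ) {k n : ℕ} (x : Fin n → Fin k) : Fin n → ℕ :=
  fun t => if (x t : ℕ) < d then 0 else (x t : ℕ)

/-- `ρ` extends the `D`-part of `x`. -/
def ZEExt (d : ℕ) {k n : ℕ} (ρ : Fin n → Fin d) (x : Fin n → Fin k) : Prop :=
  ∀ t, (x t : ℕ) < d → (ρ t : ℕ) = (x t : ℕ)

/-- Extension set of a family. -/
noncomputable def ZETT (d : ℕ) {k n : ℕ} (R : Finset (Fin n → Fin k)) :
    Finset (Fin n → Fin d) :=
  Finset.univ.filter (fun ρ => ∃ x ∈ R, ZEExt d ρ x)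

lemma ZEmem_TT {d k n : ℕ} {R : Finset (Fin n → Fin k)} {ρ : Fin n → Fin d} :
    ρ ∈ ZETT d R ↔ ∃ x ∈ R, ZEExt d ρ x := by
  simp [ZETT]

lemma ZETT_mono {d k n : ℕ} {R S : Finset (Fin n → Fin k)} (h : R ⊆ S) :
    ZETT d R ⊆ ZETT d S := by
  intro ρ hρ
  rw [ZEmem_TT] at *
  obtain ⟨x, hx, he⟩ := hρ
  exact ⟨x, h hx, he⟩

/-- Convexity inequality used in the induction. -/
lemma ZElemB {x p D lam : ℝ} (hx : 0 ≤ x) (hp : 0 ≤ p) (hD : 1 ≤ D) (hlam : 1 ≤ lam) :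
    (x + p) ^ lam + (D ^ lam - 1) * p ^ lam ≤ (x + D * p) ^ lam := by
  have hlam0 : (0:ℝ) < lam := lt_of_lt_of_le one_pos hlam
  have hD0 : (0:ℝ) ≤ D := le_trans zero_le_one hD
  rcases eq_or_lt_of_le hp with hp0 | hp0
  · rw [← hp0]
    rw [Real.zero_rpow (ne_of_gt hlam0)]
    simp
  rcases eq_or_lt_of_le hx with hx0 | hx0
  · rw [← hx0]
    rw [zero_add, zero_add, Real.mul_rpow hD0 hp]
    nlinarith [Real.rpow_nonneg hp lam]
  · have hwpos : (0:ℝ) < x + (D - 1) * p := by nlinarith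
    have hw : (x + (D - 1) * p) ≠ 0 := ne_of_gt hwpos
    have hθ0 : 0 ≤ ((D - 1) * p) / (x + (D - 1) * p) :=
      div_nonneg (by nlinarith) hwpos.le
    have hθ1 : ((D - 1) * p) / (x + (D - 1) * p) ≤ 1 := by
      rw [div_le_one hwpos]; nlinarith
    have hθ1' : (0:ℝ) ≤ 1 - ((D - 1) * p) / (x + (D - 1) * p) := by linarith
    have hsum1 : ((D - 1) * p) / (x + (D - 1) * p)
        + (1 - ((D - 1) * p) / (x + (D - 1) * p)) = 1 := by ring
    have hsum2 : (1 - ((D - 1) * p) / (x + (D - 1) * p))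
        + ((D - 1) * p) / (x + (D - 1) * p) = 1 := by ring
    have hcvx := convexOn_rpow hlam
    have hu : (p:ℝ) ∈ Set.Ici (0:ℝ) := hp
    have hv : x + D * p ∈ Set.Ici (0:ℝ) := by
      simp only [Set.mem_Ici]; nlinarith
    have e1 : (((D - 1) * p) / (x + (D - 1) * p)) * p
        + (1 - ((D - 1) * p) / (x + (D - 1) * p)) * (x + D * p) = x + p := by
      field_simp
      ring
    have e2 : (1 - ((D - 1) * p) / (x + (D - 1) * p)) * p
        + (((D - 1) * p) / (x + (D - 1) * p)) * (x + D * p) = D * p := by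
      field_simp
      ring
    have c1 := hcvx.2 hu hv hθ0 hθ1' hsum1
    have c2 := hcvx.2 hu hv hθ1' hθ0 hsum2
    simp only [smul_eq_mul] at c1 c2
    rw [e1] at c1
    rw [e2] at c2
    have hDp : (D * p) ^ lam = D ^ lam * p ^ lam := Real.mul_rpow hD0 hp
    linarith

lemma ZEtail_eq {n : ℕ} {A : Type*} {x y : Fin (n+1) → A} (h0 : x 0 = y 0)
    (ht : Fin.tail x = Fin.tail y) : x = y := by
  funext t
  refine Fin.cases ?_ ?_ t
  · exact h0
  · intro i
    exact congrFun ht i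

lemma ZEfinal (k d : ℕ) (lam : ℝ) (hlam : 1 ≤ lam) (hd1 : (1:ℝ) ≤ (d : ℝ))
    (hpow : (d : ℝ) ^ lam = ((k - d + 1 : ℕ) : ℝ))
    (rc rdc rbc dfc qc p q' ttc : ℕ)
    (hcards : rc = rdc + rbc)
    (hcardD : dfc = rdc)
    (hIHD : (dfc : ℝ) ≤ (qc : ℝ) ^ lam)
    (hRBreal : (rbc : ℝ) ≤ ((k - d : ℕ) : ℝ) * (p : ℝ) ^ lam)
    (hQle : qc ≤ q' + p)
    (hTTcard : ttc = q' + d * p) :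
    (rc : ℝ) ≤ (ttc : ℝ) ^ lam := by
  have hlam0 : (0:ℝ) ≤ lam := le_trans zero_le_one hlam
  have hkd : ((d : ℝ) ^ lam - 1) = ((k - d : ℕ) : ℝ) := by
    rw [hpow]
    push_cast
    ring
  have hB := ZElemB (x := ((q' : ℕ) : ℝ)) (p := ((p : ℕ) : ℝ)) (D := (d : ℝ))
    (Nat.cast_nonneg _) (Nat.cast_nonneg _) hd1 hlam
  rw [hkd] at hB
  calc (rc : ℝ) = (rdc : ℝ) + (rbc : ℝ) := by rw [hcards]; push_cast; ring
    _ ≤ (qc : ℝ) ^ lam + ((k - d : ℕ) : ℝ) * (p : ℝ) ^ lam := by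
        have h6 : (rdc : ℝ) ≤ (qc : ℝ) ^ lam := hcardD ▸ hIHD
        linarith
    _ ≤ ((q' : ℝ) + (p : ℝ)) ^ lam + ((k - d : ℕ) : ℝ) * (p : ℝ) ^ lam := by
        have h7 : (qc : ℝ) ≤ (q' : ℝ) + (p : ℝ) := by exact_mod_cast hQle
        have h8 : (qc : ℝ) ^ lam ≤ ((q' : ℝ) + (p : ℝ)) ^ lam :=
          Real.rpow_le_rpow (Nat.cast_nonneg _) h7 hlam0
        linarith
    _ ≤ ((q' : ℝ) + (d : ℝ) * (p : ℝ)) ^ lam := hB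
    _ = (ttc : ℝ) ^ lam := by rw [hTTcard]; push_cast; ring_nf

/-- Main combinatorial lemma: a family with pairwise distinct collapses has
`|R| ≤ |T(R)|^λ` where `d^λ = k-d+1 ≥ d`. -/
lemma ZElemA (k d : ℕ) (hd2 : 2 ≤ d) (hdk : d ≤ k) (lam : ℝ) (hlam : 1 ≤ lam)
    (hpow : (d : ℝ) ^ lam = ((k - d + 1 : ℕ) : ℝ)) :
    ∀ (n : ℕ) (R : Finset (Fin n → Fin k)),
      (∀ x ∈ R, ∀ y ∈ R, ZEtil d x = ZEtil d y → x = y) →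
      (R.card : ℝ) ≤ ((ZETT d R).card : ℝ) ^ lam := by
  have hlam0 : (0:ℝ) ≤ lam := le_trans zero_le_one hlam
  intro n
  induction n with
  | zero =>
    intro R _hinj
    rcases R.eq_empty_or_nonempty with rfl | ⟨x0, hx0⟩
    · simp [Real.rpow_nonneg]
    · have h1 : R.card ≤ 1 :=
        Finset.card_le_one.mpr (fun a _ b _ => funext fun t => t.elim0)
      have h2 : (fun t : Fin 0 => t.elim0) ∈ ZETT d R := by
        rw [ZEmem_TT]; exact ⟨x0, hx0, fun t => t.elim0⟩
      have h3 : 1 ≤ (ZETT d R).card := Finset.card_pos.mpr ⟨_, h2⟩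
      calc (R.card : ℝ) ≤ 1 := by exact_mod_cast h1
        _ ≤ ((ZETT d R).card : ℝ) ^ lam :=
          Real.one_le_rpow (by exact_mod_cast h3) hlam0
  | succ n IH =>
    intro R hinj
    have hemb : ∀ δ : Fin d, (δ : ℕ) < k := fun δ => lt_of_lt_of_le δ.isLt hdk
    set RD := R.filter (fun x => (x 0 : ℕ) < d) with hRDdef
    set RB := R.filter (fun x => ¬ (x 0 : ℕ) < d) with hRBdef
    set emb : Fin d → Fin k := fun δ => ⟨(δ : ℕ), hemb δ⟩ with hembdef
    set Dfam := RD.image (fun x : Fin (n+1) → Fin k => Fin.tail x) with hDfamdef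
    set Afam : Fin d → Finset (Fin n → Fin k) := fun δ =>
      (RD.filter (fun x => x 0 = emb δ)).image (fun x : Fin (n+1) → Fin k => Fin.tail x) with hAfamdef
    set Bfam : Fin k → Finset (Fin n → Fin k) := fun b =>
      (RB.filter (fun x => x 0 = b)).image (fun x : Fin (n+1) → Fin k => Fin.tail x) with hBfamdef
    set Q := ZETT d Dfam with hQdef
    set P := ZETT d (RB.image (fun x : Fin (n+1) → Fin k => Fin.tail x)) with hPdef
    set A : Fin d → Finset (Fin n → Fin d) := fun δ => ZETT d (Afam δ) with hAdef
    set Blet := (Finset.univ : Finset (Fin k)).filter (fun c : Fin k => ¬ (c : ℕ) < d) with hBletdef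
    set p := P.card with hpdef
    set q' := ∑ δ : Fin d, ((A δ) \ P).card with hq'def
    -- tail is injective on RD
    have htailinjD : Set.InjOn (fun x : Fin (n+1) → Fin k => Fin.tail x) ↑RD := by
      intro x hx y hy hxy
      simp only [Finset.coe_filter, Set.mem_setOf_eq, hRDdef] at hx hy
      apply hinj x hx.1 y hy.1
      funext t
      refine Fin.cases ?_ ?_ t
      · simp [ZEtil, hx.2, hy.2]
      · intro i
        exact congrFun (congrArg (ZEtil d) hxy) i
    have hcardD : Dfam.card = RD.card := Finset.card_image_of_injOn htailinjD
    -- collapse-injectivity of Dfam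
    have hinjD : ∀ x' ∈ Dfam, ∀ y' ∈ Dfam, ZEtil d x' = ZEtil d y' → x' = y' := by
      intro x' hx' y' hy' h
      obtain ⟨x, hx, rfl⟩ := Finset.mem_image.mp hx'
      obtain ⟨y, hy, rfl⟩ := Finset.mem_image.mp hy'
      have hx2 := Finset.mem_filter.mp hx
      have hy2 := Finset.mem_filter.mp hy
      have hxy : x = y := by
        apply hinj x hx2.1 y hy2.1
        funext t
        refine Fin.cases ?_ ?_ t
        · simp [ZEtil, hx2.2, hy2.2]
        · intro i
          exact congrFun h i
      rw [hxy]
    -- per-letter b facts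
    have htailinjB : ∀ b : Fin k, Set.InjOn (fun x : Fin (n+1) → Fin k => Fin.tail x) ↑(RB.filter (fun x => x 0 = b)) := by
      intro b x hx y hy hxy
      simp only [Finset.coe_filter, Set.mem_setOf_eq] at hx hy
      exact ZEtail_eq (hx.2.trans hy.2.symm) hxy
    have hcardB : ∀ b : Fin k, (Bfam b).card = (RB.filter (fun x => x 0 = b)).card :=
      fun b => Finset.card_image_of_injOn (htailinjB b)
    have hinjB : ∀ b ∈ Blet, ∀ x' ∈ Bfam b, ∀ y' ∈ Bfam b, ZEtil d x' = ZEtil d y' → x' = y' := by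
      intro b hb x' hx' y' hy' h
      obtain ⟨x, hx, rfl⟩ := Finset.mem_image.mp hx'
      obtain ⟨y, hy, rfl⟩ := Finset.mem_image.mp hy'
      have hx2 := Finset.mem_filter.mp hx
      have hy2 := Finset.mem_filter.mp hy
      have hx3 := Finset.mem_filter.mp hx2.1
      have hy3 := Finset.mem_filter.mp hy2.1
      have hxy : x = y := by
        apply hinj x hx3.1 y hy3.1
        funext t
        refine Fin.cases ?_ ?_ t
        · simp only [ZEtil, if_neg hx3.2, if_neg hy3.2, hx2.2, hy2.2]
        · intro i
          exact congrFun h i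
      rw [hxy]
    -- slice cardinality
    have hslice : ∀ δ : Fin d,
        ((ZETT d R).filter (fun ρ => ρ 0 = δ)).card = ((A δ) ∪ P).card := by
      intro δ
      have hinjslice : Set.InjOn (fun ρ : Fin (n+1) → Fin d => Fin.tail ρ)
          ↑((ZETT d R).filter (fun ρ => ρ 0 = δ)) := by
        intro ρ1 h1 ρ2 h2 h12
        simp only [Finset.coe_filter, Set.mem_setOf_eq] at h1 h2
        exact ZEtail_eq (h1.2.trans h2.2.symm) h12
      rw [← Finset.card_image_of_injOn hinjslice]
      congr 1
      ext ρ'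
      simp only [Finset.mem_image, Finset.mem_filter, Finset.mem_union]
      constructor
      · rintro ⟨ρ, ⟨hρT, hρ0⟩, rfl⟩
        rw [ZEmem_TT] at hρT
        obtain ⟨x, hxR, hext⟩ := hρT
        by_cases hx0 : (x 0 : ℕ) < d
        · left
          rw [hAdef]
          rw [ZEmem_TT]
          refine ⟨Fin.tail x, ?_, fun t ht => hext t.succ ht⟩
          apply Finset.mem_image_of_mem
          rw [Finset.mem_filter]
          refine ⟨Finset.mem_filter.mpr ⟨hxR, hx0⟩, ?_⟩
          apply Fin.ext
          have h5 := hext 0 hx0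
          rw [hρ0] at h5
          simpa [hembdef] using h5.symm
        · right
          rw [hPdef, ZEmem_TT]
          exact ⟨Fin.tail x,
            Finset.mem_image_of_mem _ (Finset.mem_filter.mpr ⟨hxR, hx0⟩),
            fun t ht => hext t.succ ht⟩
      · rintro (h' | h')
        · rw [hAdef, ZEmem_TT] at h'
          obtain ⟨x', hx', hext'⟩ := h'
          obtain ⟨x, hx, rfl⟩ := Finset.mem_image.mp hx'
          have hxmem := Finset.mem_filter.mp hx
          refine ⟨Fin.cons δ ρ', ⟨?_, by simp⟩, by simp⟩
          rw [ZEmem_TT]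
          refine ⟨x, (Finset.mem_filter.mp hxmem.1).1, ?_⟩
          intro t
          refine Fin.cases ?_ ?_ t
          · intro _
            rw [hxmem.2]
            simp [hembdef]
          · intro i hi
            simpa [Fin.tail] using hext' i hi
        · rw [hPdef, ZEmem_TT] at h'
          obtain ⟨x', hx', hext'⟩ := h'
          obtain ⟨x, hx, rfl⟩ := Finset.mem_image.mp hx'
          have hxmem := Finset.mem_filter.mp hx
          refine ⟨Fin.cons δ ρ', ⟨?_, by simp⟩, by simp⟩
          rw [ZEmem_TT]
          refine ⟨x, hxmem.1, ?_⟩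
          intro t
          refine Fin.cases ?_ ?_ t
          · intro hcon
            exact absurd hcon hxmem.2
          · intro i hi
            simpa [Fin.tail] using hext' i hi
    -- total count of TT R
    have hTTcard : (ZETT d R).card = q' + d * p := by
      rw [Finset.card_eq_sum_card_fiberwise
        (f := fun ρ => ρ 0) (t := (Finset.univ : Finset (Fin d)))
        (fun ρ _ => Finset.mem_univ _)]
      have hstep : ∀ δ : Fin d,
          ((ZETT d R).filter (fun ρ => ρ 0 = δ)).card = ((A δ) \ P).card + p := by
        intro δ
        rw [hslice δ, ← Finset.card_sdiff_add_card]
      rw [Finset.sum_congr rfl (fun δ _ => hstep δ), Finset.sum_add_distrib,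
        Finset.sum_const, Finset.card_univ, Fintype.card_fin, smul_eq_mul]
    -- Q is covered
    have hQle : Q.card ≤ q' + p := by
      have hQsub : Q ⊆ P ∪ Finset.univ.biUnion (fun δ => (A δ) \ P) := by
        intro ρ' hρ'
        rw [hQdef, ZEmem_TT] at hρ'
        obtain ⟨x', hx', hext'⟩ := hρ'
        obtain ⟨x, hx, rfl⟩ := Finset.mem_image.mp hx'
        have hx2 := Finset.mem_filter.mp hx
        have hρA : ρ' ∈ A ⟨(x 0 : ℕ), hx2.2⟩ := by
          rw [hAdef, ZEmem_TT]
          refine ⟨Fin.tail x, ?_, hext'⟩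
          apply Finset.mem_image_of_mem
          rw [Finset.mem_filter]
          exact ⟨hx, Fin.ext (by simp [hembdef])⟩
        rw [Finset.mem_union]
        by_cases hPm : ρ' ∈ P
        · exact Or.inl hPm
        · exact Or.inr (Finset.mem_biUnion.mpr
            ⟨_, Finset.mem_univ _, Finset.mem_sdiff.mpr ⟨hρA, hPm⟩⟩)
      calc Q.card ≤ (P ∪ Finset.univ.biUnion (fun δ => (A δ) \ P)).card :=
            Finset.card_le_card hQsub
        _ ≤ P.card + (Finset.univ.biUnion (fun δ => (A δ) \ P)).card :=
            Finset.card_union_le _ _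
        _ ≤ p + q' := Nat.add_le_add_left Finset.card_biUnion_le _
        _ = q' + p := by ring
    -- RB fiberwise
    have hRBcard : RB.card = ∑ b ∈ Blet, (RB.filter (fun x => x 0 = b)).card := by
      apply Finset.card_eq_sum_card_fiberwise (f := fun x : Fin (n+1) → Fin k => x 0)
      intro x hx
      exact Finset.mem_filter.mpr ⟨Finset.mem_univ _, (Finset.mem_filter.mp (Finset.mem_coe.mp hx)).2⟩
    -- Blet card bound
    have hBletcard : Blet.card ≤ k - d := by
      have h0 := Finset.card_filter_add_card_filter_not
        (s := (Finset.univ : Finset (Fin k))) (p := fun c : Fin k => (c : ℕ) < d)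
      have h1 : ((Finset.univ : Finset (Fin k)).filter (fun c : Fin k => (c : ℕ) < d)).card
          + Blet.card = k := by
        rw [hBletdef]
        simpa using h0
      have hembinj : Function.Injective emb := by
        intro a b hab
        apply Fin.ext
        simpa [hembdef] using congrArg Fin.val hab
      have h2 : d ≤ ((Finset.univ : Finset (Fin k)).filter (fun c : Fin k => (c : ℕ) < d)).card := by
        have h3 : ((Finset.univ : Finset (Fin d)).image emb).card = d := by
          rw [Finset.card_image_of_injective _ hembinj]
          simp
        have hsub : ((Finset.univ : Finset (Fin d)).image emb)
            ⊆ (Finset.univ : Finset (Fin k)).filter (fun c : Fin k => (c : ℕ) < d) := by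
          intro c hc
          obtain ⟨δ, _, rfl⟩ := Finset.mem_image.mp hc
          rw [Finset.mem_filter]
          exact ⟨Finset.mem_univ _, by simpa [hembdef] using δ.isLt⟩
        calc d = ((Finset.univ : Finset (Fin d)).image emb).card := h3.symm
          _ ≤ _ := Finset.card_le_card hsub
      refine Nat.le_sub_of_add_le ?_
      calc Blet.card + d
          ≤ Blet.card + ((Finset.univ : Finset (Fin k)).filter
              (fun c : Fin k => (c : ℕ) < d)).card := Nat.add_le_add_left h2 _
        _ = k := by rw [Nat.add_comm]; exact h1
    -- IH applications
    have hIHD : (Dfam.card : ℝ) ≤ (Q.card : ℝ) ^ lam := IH Dfam hinjD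
    have hIHb : ∀ b ∈ Blet, ((RB.filter (fun x => x 0 = b)).card : ℝ) ≤ ((p : ℕ) : ℝ) ^ lam := by
      intro b hb
      have h1 := IH (Bfam b) (hinjB b hb)
      have h2 : ZETT d (Bfam b) ⊆ P := by
        rw [hPdef]
        exact ZETT_mono (Finset.image_subset_image (Finset.filter_subset _ _))
      calc ((RB.filter (fun x => x 0 = b)).card : ℝ) = ((Bfam b).card : ℝ) := by
            rw [hcardB b]
        _ ≤ ((ZETT d (Bfam b)).card : ℝ) ^ lam := h1
        _ ≤ ((p : ℕ) : ℝ) ^ lam := by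
            apply Real.rpow_le_rpow (Nat.cast_nonneg _)
              (by exact_mod_cast Finset.card_le_card h2) hlam0
    -- assemble
    have hcards : R.card = RD.card + RB.card := by
      rw [hRDdef, hRBdef]
      exact (Finset.card_filter_add_card_filter_not
        (p := fun x : Fin (n+1) → Fin k => (x 0 : ℕ) < d) (s := R)).symm
    have hRBreal : (RB.card : ℝ) ≤ ((k - d : ℕ) : ℝ) * ((p : ℕ) : ℝ) ^ lam := by
      rw [hRBcard]
      push_cast
      calc ∑ b ∈ Blet, ((RB.filter (fun x => x 0 = b)).card : ℝ)
          ≤ ∑ _b ∈ Blet, ((p : ℕ) : ℝ) ^ lam := Finset.sum_le_sum hIHb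
        _ = (Blet.card : ℝ) * ((p : ℕ) : ℝ) ^ lam := by
            rw [Finset.sum_const, nsmul_eq_mul]
        _ ≤ ((k - d : ℕ) : ℝ) * ((p : ℕ) : ℝ) ^ lam := by
            apply mul_le_mul_of_nonneg_right _ (Real.rpow_nonneg (Nat.cast_nonneg _) lam)
            exact_mod_cast hBletcard
    have hd1 : (1:ℝ) ≤ (d : ℝ) := by
      have h9 : (1:ℕ) ≤ d := le_trans one_le_two hd2
      exact_mod_cast h9
    have hB := ZElemB (x := ((q' : ℕ) : ℝ)) (p := ((p : ℕ) : ℝ)) (D := (d : ℝ))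
      (Nat.cast_nonneg _) (Nat.cast_nonneg _) hd1 hlam
    have hkd : ((d : ℝ) ^ lam - 1) = ((k - d : ℕ) : ℝ) := by
      rw [hpow]
      push_cast
      ring
    exact ZEfinal k d lam hlam hd1 hpow R.card RD.card RB.card Dfam.card Q.card p q'
      (ZETT d R).card hcards hcardD hIHD hRBreal hQle hTTcard


lemma ZEmain_count (k d r n : ℕ) (hr : 0 < r) (hd2 : 2 ≤ d) (hdk2 : 2 * d ≤ k + 1)
    (G : Fin r → SimpleGraph (Fin k))
    (hG1 : ∀ a b : Fin k, (G ⟨0, hr⟩).Adj a b ↔ a ≠ b ∧ (d ≤ a.val ∨ d ≤ b.val))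
    (hG2 : ∀ i : Fin r, i ≠ ⟨0, hr⟩ →
      ∀ a b : Fin k, a ≠ b → a.val < d → b.val < d → (G i).Adj a b)
    (m : Fin r → ℕ) (hm : ∀ i, 0 < m i) (hf : FeasibleAtLength G m n)
    (lam : ℝ) (hlam : 1 ≤ lam) (hpow : (d : ℝ) ^ lam = ((k - d + 1 : ℕ) : ℝ)) :
    ((m ⟨0, hr⟩ : ℕ) : ℝ) ^ lam * ((∏ i ∈ Finset.univ.erase (⟨0, hr⟩ : Fin r), m i : ℕ) : ℝ)
      ≤ ((k - d + 1 : ℕ) : ℝ) ^ (n : ℕ) := by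
  classical
  have hdk : d ≤ k := by omega
  obtain ⟨E, hE⟩ := hf
  set i0 : Fin r := ⟨0, hr⟩ with hi0
  set patch : Fin (m i0) → (∀ j : {j : Fin r // j ≠ i0}, Fin (m j.1)) → (∀ i : Fin r, Fin (m i)) :=
    fun a0 g i => if h : i = i0 then cast (congrArg (fun j => Fin (m j)) h).symm a0 else g ⟨i, h⟩
    with hpatchdef
  have patch_self : ∀ a0 g, patch a0 g i0 = a0 := by
    intro a0 g; simp [hpatchdef]
  have patch_ne : ∀ a0 g i (h : i ≠ i0), patch a0 g i = g ⟨i, h⟩ := by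
    intro a0 g i h; simp [hpatchdef, h]
  set F : Fin (m i0) → (∀ j : {j : Fin r // j ≠ i0}, Fin (m j.1)) → (Fin n → Fin k) :=
    fun a0 g => E (patch a0 g) with hFdef
  have hFinj : ∀ a0, Function.Injective (F a0) := by
    intro a0 g g' hfg
    by_contra hne
    obtain ⟨j, hj⟩ := Function.ne_iff.mp hne
    have hab : patch a0 g j.1 ≠ patch a0 g' j.1 := by
      rw [patch_ne a0 g j.1 j.2, patch_ne a0 g' j.1 j.2]
      simpa using hj
    obtain ⟨t, ht, -⟩ := hE j.1 _ _ hab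
    exact ht (congrFun hfg t)
  set Row : Fin (m i0) → Finset (Fin n → Fin k) := fun a0 => Finset.univ.image (F a0)
    with hRowdef
  have hRowcard : ∀ a0, (Row a0).card = ∏ i ∈ Finset.univ.erase i0, m i := by
    intro a0
    rw [hRowdef]
    rw [Finset.card_image_of_injective _ (hFinj a0), Finset.card_univ, Fintype.card_pi]
    simp only [Fintype.card_fin]
    exact (Finset.prod_subtype (Finset.univ.erase i0)
      (fun x => by simp [Finset.mem_erase]) m).symm
  have hRowinj : ∀ a0, ∀ x ∈ Row a0, ∀ y ∈ Row a0, ZEtil d x = ZEtil d y → x = y := by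
    intro a0 x hx y hy htil
    rw [hRowdef] at hx hy
    obtain ⟨g, -, rfl⟩ := Finset.mem_image.mp hx
    obtain ⟨g', -, rfl⟩ := Finset.mem_image.mp hy
    rcases eq_or_ne g g' with rfl | hgg
    · rfl
    exfalso
    obtain ⟨j, hj⟩ := Function.ne_iff.mp hgg
    have hab : patch a0 g j.1 ≠ patch a0 g' j.1 := by
      rw [patch_ne a0 g j.1 j.2, patch_ne a0 g' j.1 j.2]
      simpa using hj
    obtain ⟨t, ht, hadj⟩ := hE j.1 _ _ hab
    have h2 := congrFun htil t
    simp only [ZEtil] at h2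
    by_cases h1 : ((F a0 g) t : ℕ) < d <;> by_cases h3 : ((F a0 g') t : ℕ) < d
    · exact hadj (hG2 j.1 j.2 _ _ ht h1 h3)
    · rw [if_pos h1, if_neg h3] at h2
      exact h3 (by omega)
    · rw [if_neg h1, if_pos h3] at h2
      exact h1 (by omega)
    · rw [if_neg h1, if_neg h3] at h2
      exact ht (Fin.ext h2)
  have hdisj : ∀ a0 ∈ (Finset.univ : Finset (Fin (m i0))), ∀ a0' ∈ (Finset.univ : Finset (Fin (m i0))),
      a0 ≠ a0' → Disjoint (ZETT d (Row a0)) (ZETT d (Row a0')) := by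
    intro a0 _ a0' _ hne
    rw [Finset.disjoint_left]
    intro ρ h1 h2
    rw [ZEmem_TT] at h1 h2
    obtain ⟨x, hx, hex⟩ := h1
    obtain ⟨y, hy, hey⟩ := h2
    rw [hRowdef] at hx hy
    obtain ⟨g, -, rfl⟩ := Finset.mem_image.mp hx
    obtain ⟨g', -, rfl⟩ := Finset.mem_image.mp hy
    have hab : patch a0 g i0 ≠ patch a0' g' i0 := by
      rw [patch_self, patch_self]; exact hne
    obtain ⟨t, ht, hadj⟩ := hE i0 _ _ hab
    have hboth : ((F a0 g) t : ℕ) < d ∧ ((F a0' g') t : ℕ) < d := by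
      by_contra hc
      apply hadj
      rw [hG1]
      refine ⟨ht, ?_⟩
      rcases Nat.lt_or_ge ((F a0 g) t : ℕ) d with h1 | h1
      · rcases Nat.lt_or_ge ((F a0' g') t : ℕ) d with h3 | h3
        · exact absurd ⟨h1, h3⟩ hc
        · exact Or.inr h3
      · exact Or.inl h1
    have e1 := hex t hboth.1
    have e2 := hey t hboth.2
    exact ht (Fin.ext (e1.symm.trans e2))
  have hsum : ∑ a0 : Fin (m i0), (ZETT d (Row a0)).card ≤ d ^ n := by
    rw [← Finset.card_biUnion hdisj]
    calc (Finset.univ.biUnion fun a0 => ZETT d (Row a0)).card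
        ≤ Fintype.card (Fin n → Fin d) := Finset.card_le_univ _
      _ = d ^ n := by simp [Fintype.card_fun]
  have hne0 : (Finset.univ : Finset (Fin (m i0))).Nonempty := ⟨⟨0, hm i0⟩, Finset.mem_univ _⟩
  obtain ⟨a0s, -, hmin⟩ := Finset.exists_min_image Finset.univ
    (fun a0 => (ZETT d (Row a0)).card) hne0
  have hmt : m i0 * (ZETT d (Row a0s)).card ≤ d ^ n := by
    calc m i0 * (ZETT d (Row a0s)).card
        = ∑ _a0 : Fin (m i0), (ZETT d (Row a0s)).card := by
          rw [Finset.sum_const, Finset.card_univ, Fintype.card_fin, smul_eq_mul]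
      _ ≤ ∑ a0 : Fin (m i0), (ZETT d (Row a0)).card :=
          Finset.sum_le_sum (fun a0 _ => hmin a0 (Finset.mem_univ _))
      _ ≤ d ^ n := hsum
  have hA := ZElemA k d hd2 hdk lam hlam hpow n (Row a0s) (hRowinj a0s)
  have hlam0 : (0:ℝ) ≤ lam := le_trans zero_le_one hlam
  have hprod : ((∏ i ∈ Finset.univ.erase i0, m i : ℕ) : ℝ)
      ≤ ((ZETT d (Row a0s)).card : ℝ) ^ lam := by
    calc ((∏ i ∈ Finset.univ.erase i0, m i : ℕ) : ℝ) = ((Row a0s).card : ℝ) := by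
          rw [hRowcard a0s]
      _ ≤ _ := hA
  calc ((m i0 : ℕ) : ℝ) ^ lam * ((∏ i ∈ Finset.univ.erase i0, m i : ℕ) : ℝ)
      ≤ ((m i0 : ℕ) : ℝ) ^ lam * ((ZETT d (Row a0s)).card : ℝ) ^ lam :=
        mul_le_mul_of_nonneg_left hprod (Real.rpow_nonneg (Nat.cast_nonneg _) lam)
    _ = (((m i0 * (ZETT d (Row a0s)).card : ℕ)) : ℝ) ^ lam := by
        rw [← Real.mul_rpow (Nat.cast_nonneg _) (Nat.cast_nonneg _)]
        norm_cast
    _ ≤ (((d ^ n : ℕ)) : ℝ) ^ lam :=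
        Real.rpow_le_rpow (Nat.cast_nonneg _) (by exact_mod_cast hmt) hlam0
    _ = ((k - d + 1 : ℕ) : ℝ) ^ (n : ℕ) := by
        push_cast
        rw [← Real.rpow_natCast ((d : ℝ)) n, ← Real.rpow_mul (Nat.cast_nonneg d),
          mul_comm, Real.rpow_mul (Nat.cast_nonneg d), hpow, Real.rpow_natCast]
        push_cast
        ring

end ZEAux

/-- Corollary 14: if user 1 has the complete graph on `Σ_k` minus a clique on `Σ_d` with
`2 ≤ d ≤ (k+1)/2`, and every other user's confusion graph contains the complement of `G 1`
(i.e. every pair of distinct letters of `Σ_d` is an edge of `G i` for `i ≠ 1`), then any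
feasible rate vector `(α log₂ d, R₂, …, R_r)` with `α ∈ [0,1]` satisfies
`∑_{i=2}^r R i ≤ (1−α) log₂ (k−d+1)`. -/
theorem sum_rest_le_of_cliqueMinusClique_complements (k d r : ℕ) (hr : 0 < r)
    (hd : 2 ≤ d) (hdk : 2 * d ≤ k + 1)
    (G : Fin r → SimpleGraph (Fin k))
    (hG1 : ∀ a b : Fin k, (G ⟨0, hr⟩).Adj a b ↔ a ≠ b ∧ (d ≤ a.val ∨ d ≤ b.val))
    (hG2 : ∀ i : Fin r, i ≠ ⟨0, hr⟩ →
      ∀ a b : Fin k, a ≠ b → a.val < d → b.val < d → (G i).Adj a b)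
    (α : ℝ) (hα : α ∈ Set.Icc (0 : ℝ) 1)
    (R : Fin r → ℝ) (hR : FeasibleRate G R) (hR0 : R ⟨0, hr⟩ = α * Real.logb 2 d) :
    ∑ i ∈ Finset.univ.erase (⟨0, hr⟩ : Fin r), R i ≤
      (1 - α) * Real.logb 2 ((k - d + 1 : ℕ) : ℝ) := by
  classical
  obtain ⟨-, m, hmpos, hfeas, htend⟩ := hR
  have hd2 : 2 ≤ d := hd
  have hC2 : (2:ℕ) ≤ k - d + 1 := by omega
  have hC1 : (1:ℝ) < ((k - d + 1 : ℕ) : ℝ) := by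
    have h2 : ((2:ℕ):ℝ) ≤ ((k - d + 1 : ℕ) : ℝ) := by exact_mod_cast hC2
    norm_num at h2 ⊢
    linarith
  have hd1 : (1:ℝ) < (d : ℝ) := by
    have h2 : ((2:ℕ):ℝ) ≤ ((d:ℕ) : ℝ) := by exact_mod_cast hd2
    norm_num at h2 ⊢
    linarith
  set lam : ℝ := Real.logb d ((k - d + 1 : ℕ) : ℝ) with hlam_def
  have hpow : (d : ℝ) ^ lam = ((k - d + 1 : ℕ) : ℝ) :=
    Real.rpow_logb (by linarith) (by linarith) (by linarith)
  have hlogd : (0:ℝ) < Real.log d := Real.log_pos hd1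
  have hlog2 : (0:ℝ) < Real.log 2 := Real.log_pos one_lt_two
  have hlogC : (0:ℝ) < Real.log ((k - d + 1 : ℕ) : ℝ) := Real.log_pos hC1
  have hdC : ((d:ℕ):ℝ) ≤ ((k - d + 1 : ℕ) : ℝ) := by
    have : d ≤ k - d + 1 := by omega
    exact_mod_cast this
  have hlam1 : 1 ≤ lam := by
    rw [hlam_def, Real.logb, le_div_iff₀ hlogd, one_mul]
    exact Real.log_le_log (by linarith) hdC
  have hkey : ∀ N : ℕ, 1 ≤ N →
      lam * (Real.logb 2 (m N ⟨0, hr⟩) / N)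
        + ∑ i ∈ Finset.univ.erase (⟨0, hr⟩ : Fin r), Real.logb 2 (m N i) / N
        ≤ Real.logb 2 ((k - d + 1 : ℕ) : ℝ) := by
    intro N hN
    have h1 := ZEmain_count k d r N hr hd2 hdk G hG1 hG2 (m N) (hmpos N) (hfeas N)
      lam hlam1 hpow
    have hNpos : (0:ℝ) < (N:ℝ) := by exact_mod_cast hN
    have hm0pos : (0:ℝ) < ((m N ⟨0, hr⟩ : ℕ) : ℝ) := by exact_mod_cast hmpos N _
    have hprodpos0 : 0 < ∏ i ∈ Finset.univ.erase (⟨0, hr⟩ : Fin r), m N i :=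
      Finset.prod_pos (fun i _ => hmpos N i)
    have hprodpos : (0:ℝ) < ((∏ i ∈ Finset.univ.erase (⟨0, hr⟩ : Fin r), m N i : ℕ) : ℝ) := by
      exact_mod_cast hprodpos0
    have hrpos : (0:ℝ) < ((m N ⟨0, hr⟩ : ℕ) : ℝ) ^ lam := Real.rpow_pos_of_pos hm0pos lam
    have hlog := Real.log_le_log (mul_pos hrpos hprodpos) h1
    rw [Real.log_mul (ne_of_gt hrpos) (ne_of_gt hprodpos), Real.log_rpow hm0pos,
      Real.log_pow] at hlog
    have hlp : Real.log ((∏ i ∈ Finset.univ.erase (⟨0, hr⟩ : Fin r), m N i : ℕ) : ℝ)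
        = ∑ i ∈ Finset.univ.erase (⟨0, hr⟩ : Fin r), Real.log ((m N i : ℕ) : ℝ) := by
      rw [Nat.cast_prod, Real.log_prod]
      exact fun i _ => ne_of_gt (by exact_mod_cast hmpos N i)
    rw [hlp] at hlog
    -- hlog : lam * log m0 + Σ log mi ≤ N * log C
    simp only [Real.logb]
    have heq : lam * (Real.log ((m N ⟨0, hr⟩ : ℕ) : ℝ) / Real.log 2 / (N:ℝ))
        + ∑ i ∈ Finset.univ.erase (⟨0, hr⟩ : Fin r),
            Real.log ((m N i : ℕ) : ℝ) / Real.log 2 / (N:ℝ)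
        = (lam * Real.log ((m N ⟨0, hr⟩ : ℕ) : ℝ)
            + ∑ i ∈ Finset.univ.erase (⟨0, hr⟩ : Fin r), Real.log ((m N i : ℕ) : ℝ))
          / ((N:ℝ) * Real.log 2) := by
      simp only [div_div]
      rw [← Finset.sum_div, ← mul_div_assoc, ← add_div,
        mul_comm (Real.log 2) ((N:ℝ))]
    rw [heq]
    rw [div_le_div_iff₀ (by positivity) hlog2]
    have h9 := mul_le_mul_of_nonneg_right hlog hlog2.le
    nlinarith [h9]
  have hTend : Filter.Tendsto
      (fun N : ℕ => lam * (Real.logb 2 (m N ⟨0, hr⟩) / N)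
        + ∑ i ∈ Finset.univ.erase (⟨0, hr⟩ : Fin r), Real.logb 2 (m N i) / N)
      Filter.atTop
      (nhds (lam * R ⟨0, hr⟩ + ∑ i ∈ Finset.univ.erase (⟨0, hr⟩ : Fin r), R i)) := by
    exact ((htend ⟨0, hr⟩).const_mul lam).add
      (tendsto_finset_sum _ (fun i _ => htend i))
  have hfin : lam * R ⟨0, hr⟩ + ∑ i ∈ Finset.univ.erase (⟨0, hr⟩ : Fin r), R i
      ≤ Real.logb 2 ((k - d + 1 : ℕ) : ℝ) :=
    le_of_tendsto hTend (Filter.eventually_atTop.mpr ⟨1, fun N hN => hkey N hN⟩)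
  have hll : lam * Real.logb 2 (d : ℝ) = Real.logb 2 ((k - d + 1 : ℕ) : ℝ) := by
    rw [hlam_def]
    simp only [Real.logb]
    field_simp
  rw [hR0] at hfin
  have hswap : lam * (α * Real.logb 2 (d : ℝ)) = α * Real.logb 2 ((k - d + 1 : ℕ) : ℝ) := by
    rw [← hll]; ring
  linarith [hfin, hswap]
end
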